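/- arXiv:2209.08963 — 3 statements merged into one kernel-verified Lean document; each statement's English description precedes it below -/
import Mathlib

section
/- Let λ ⊢ b, μ ⊢ a with μ ⊆ λ, and let T be a standard skew tableau of shape λ/μ. If λ/μ is not a horizontal strip, then there exist entries i < j of T with axial distance a(j,i)(T) = (v_j − u_j) − (v_i − u_i) negative. Conversely, if λ/μ is a horizontal strip, then the tableau T^rev in which entries increase from left to right (reading the cells of the strip in order of increasing column index) is the unique standard skew tableau of shape λ/μ such that a(j,i)(T) > 0 for all 1 ≤ i < j ≤ b−a. -/
open scoped Classical

/-- A partition: a weakly decreasing sequence of naturals that is eventually zero. -/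
def IsPartition (l : ℕ → ℕ) : Prop := Antitone l ∧ ∃ N, ∀ i, N ≤ i → l i = 0

/-- The cells (Young diagram) of a partition, indexed by (row, column), 0-indexed. -/
def cells (l : ℕ → ℕ) : Set (ℕ × ℕ) := {p | p.2 < l p.1}

/-- Containment of (the Young diagrams of) partitions: `m ⊆ l`. -/
def SubDiagram (m l : ℕ → ℕ) : Prop := ∀ i, m i ≤ l i

/-- The skew diagram `l / m`. -/
def skewCells (l m : ℕ → ℕ) : Set (ℕ × ℕ) := cells l \ cells m

/-- A set of cells is a horizontal strip if each column contains at most one cell. -/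
def IsHorizontalStrip (s : Set (ℕ × ℕ)) : Prop :=
  ∀ p ∈ s, ∀ q ∈ s, p.2 = q.2 → p = q

/-- A set of cells is a vertical strip if each row contains at most one cell. -/
def IsVerticalStrip (s : Set (ℕ × ℕ)) : Prop :=
  ∀ p ∈ s, ∀ q ∈ s, p.1 = q.1 → p = q

/-- `λ̄`: the partition obtained from `λ` by deleting its first row. -/
def rowBar (l : ℕ → ℕ) : ℕ → ℕ := fun i => l (i + 1)

/-- `λ'`: the partition obtained from `λ` by deleting its first column. -/
def colBar (l : ℕ → ℕ) : ℕ → ℕ := fun i => l i - 1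

/-- The transpose (conjugate) partition. -/
noncomputable def transposeP (l : ℕ → ℕ) : ℕ → ℕ := fun j => Set.ncard {i | j < l i}

/-- `λ ⊢ n`: a partition of `n`. -/
def IsPartitionOfSize (l : ℕ → ℕ) (n : ℕ) : Prop := IsPartition l ∧ (cells l).ncard = n

/-- intersection of partitions (componentwise min / intersection of diagrams) -/
def interP (l m : ℕ → ℕ) : ℕ → ℕ := fun i => min (l i) (m i)

/-- A standard skew tableau of shape `l/m` with entries `1,…,n` (taking the value `0`
outside the skew diagram): a bijective labelling of the cells of `l/m` by `{1,…,n}`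
which increases along rows and down columns. Taking `m = 0` gives standard Young
tableaux of shape `l`. -/
def IsSkewSYT (l m : ℕ → ℕ) (n : ℕ) (t : ℕ × ℕ → ℕ) : Prop :=
  Set.BijOn t (skewCells l m) (Set.Icc 1 n) ∧
  (∀ p, p ∉ skewCells l m → t p = 0) ∧
  (∀ p ∈ skewCells l m, ∀ q ∈ skewCells l m, p.1 = q.1 → p.2 < q.2 → t p < t q) ∧
  (∀ p ∈ skewCells l m, ∀ q ∈ skewCells l m, p.2 = q.2 → p.1 < q.1 → t p < t q)


section StripAux

lemma cellsFinite {l : ℕ → ℕ} (hl : IsPartition l) : (cells l).Finite := by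
  obtain ⟨hanti, N, hN⟩ := hl
  apply Set.Finite.subset ((Set.finite_Iio N).prod (Set.finite_Iio (l 0)))
  rintro ⟨u, v⟩ h
  simp only [cells, Set.mem_setOf_eq] at h
  constructor
  · simp only [Set.mem_Iio]
    by_contra hc
    push_neg at hc
    have := hN u hc
    omega
  · simp only [Set.mem_Iio]
    exact lt_of_lt_of_le h (hanti (Nat.zero_le u))

lemma mem_skew {l m : ℕ → ℕ} {p : ℕ × ℕ} :
    p ∈ skewCells l m ↔ p.2 < l p.1 ∧ ¬ p.2 < m p.1 := by
  simp [skewCells, cells, Set.mem_diff, Set.mem_setOf_eq]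

lemma hsRow {l m : ℕ → ℕ} (hl : Antitone l)
    (hhs : IsHorizontalStrip (skewCells l m)) :
    ∀ p ∈ skewCells l m, ∀ q ∈ skewCells l m, p.2 < q.2 → q.1 ≤ p.1 := by
  rintro ⟨u1, v1⟩ hp ⟨u2, v2⟩ hq h
  simp only at h ⊢
  by_contra hc
  push_neg at hc
  rw [mem_skew] at hp hq
  simp only at hp hq
  have h1 : v2 < l u1 := lt_of_lt_of_le hq.1 (hl (le_of_lt hc))
  by_cases hmem : v2 < m u1
  · omega
  · have hin : (u1, v2) ∈ skewCells l m := mem_skew.mpr ⟨h1, hmem⟩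
    have := hhs (u1, v2) hin (u2, v2) (mem_skew.mpr hq) rfl
    simp only [Prod.mk.injEq] at this
    omega

/-- In a horizontal strip, smaller column implies smaller content. -/
lemma contentOfCol {l m : ℕ → ℕ} (hl : Antitone l)
    (hhs : IsHorizontalStrip (skewCells l m)) :
    ∀ p ∈ skewCells l m, ∀ q ∈ skewCells l m, p.2 < q.2 →
      ((p.2 : ℤ) - (p.1 : ℤ)) < ((q.2 : ℤ) - (q.1 : ℤ)) := by
  intro p hp q hq h
  have := hsRow hl hhs p hp q hq h
  have h2 : (q.1 : ℤ) ≤ (p.1 : ℤ) := by exact_mod_cast this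
  have h3 : (p.2 : ℤ) < (q.2 : ℤ) := by exact_mod_cast h
  omega

/-- In a horizontal strip, larger content implies larger column. -/
lemma colOfContent {l m : ℕ → ℕ} (hl : Antitone l)
    (hhs : IsHorizontalStrip (skewCells l m)) :
    ∀ p ∈ skewCells l m, ∀ q ∈ skewCells l m,
      ((p.2 : ℤ) - (p.1 : ℤ)) < ((q.2 : ℤ) - (q.1 : ℤ)) → p.2 < q.2 := by
  intro p hp q hq h
  rcases lt_trichotomy p.2 q.2 with h1 | h1 | h1
  · exact h1
  · have := hhs p hp q hq h1
    subst this; omega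
  · have := contentOfCol hl hhs q hq p hp h1
    omega

/-- If `t` is injective on the strip and order-reflects columns, it order-preserves them. -/
lemma monoOfPos {l m : ℕ → ℕ}
    {t : ℕ × ℕ → ℕ} (hinj : Set.InjOn t (skewCells l m))
    (hpos : ∀ p ∈ skewCells l m, ∀ q ∈ skewCells l m, t p < t q → p.2 < q.2) :
    ∀ p ∈ skewCells l m, ∀ q ∈ skewCells l m, p.2 < q.2 → t p < t q := by
  intro p hp q hq h
  rcases lt_trichotomy (t p) (t q) with h1 | h1 | h1
  · exact h1
  · exact absurd (hinj hp hq h1) (by rintro rfl; omega)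
  · have := hpos q hq p hp h1; omega

/-- Any SYT on a horizontal strip which order-reflects columns is given by the
column-counting formula. -/
lemma keyVal {l m : ℕ → ℕ} {n : ℕ} (hhs : IsHorizontalStrip (skewCells l m))
    (hfin : (skewCells l m).Finite)
    {t : ℕ × ℕ → ℕ} (ht : IsSkewSYT l m n t)
    (hpos : ∀ p ∈ skewCells l m, ∀ q ∈ skewCells l m, t p < t q → p.2 < q.2) :
    ∀ p ∈ skewCells l m, t p = (hfin.toFinset.filter (fun q => q.2 ≤ p.2)).card := by
  intro p hp
  obtain ⟨⟨hmap, hinj, hsurj⟩, -, -, -⟩ := ht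
  have hmono := monoOfPos hinj hpos
  have hF : ∀ q, q ∈ hfin.toFinset ↔ q ∈ skewCells l m := fun q => hfin.mem_toFinset
  have hset : hfin.toFinset.filter (fun q => q.2 ≤ p.2)
      = hfin.toFinset.filter (fun q => t q ≤ t p) := by
    apply Finset.filter_congr
    intro q hq
    have hq' : q ∈ skewCells l m := (hF q).mp hq
    constructor
    · intro h
      rcases Nat.lt_or_ge q.2 p.2 with h1 | h1
      · exact le_of_lt (hmono q hq' p hp h1)
      · have : q.2 = p.2 := le_antisymm h h1
        have := hhs q hq' p hp this
        subst this; exact le_refl _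
    · intro h
      rcases Nat.lt_or_ge (t q) (t p) with h1 | h1
      · exact le_of_lt (hpos q hq' p hp h1)
      · have : t q = t p := le_antisymm h h1
        have := hinj hq' hp this
        subst this; exact le_refl _
  rw [hset]
  have hinjF : Set.InjOn t (hfin.toFinset.filter (fun q => t q ≤ t p)) := by
    intro x hx y hy hxy
    simp only [Finset.coe_filter, Set.mem_setOf_eq, hF] at hx hy
    exact hinj hx.1 hy.1 hxy
  have hcardF : ((hfin.toFinset.filter (fun q => t q ≤ t p)).image t).card
      = (hfin.toFinset.filter (fun q => t q ≤ t p)).card :=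
    Finset.card_image_of_injOn hinjF
  have htp : t p ∈ Set.Icc 1 n := hmap hp
  have himg : (hfin.toFinset.filter (fun q => t q ≤ t p)).image t
      = Finset.Icc 1 (t p) := by
    apply Finset.ext
    intro k
    simp only [Finset.mem_image, Finset.mem_filter, Finset.mem_Icc]
    constructor
    · rintro ⟨q, ⟨hq1, hq2⟩, rfl⟩
      have hq' : q ∈ skewCells l m := (hF q).mp hq1
      have := hmap hq'
      simp only [Set.mem_Icc] at this
      exact ⟨this.1, hq2⟩
    · rintro ⟨hk1, hk2⟩
      have hk : k ∈ Set.Icc 1 n := by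
        simp only [Set.mem_Icc] at htp ⊢
        exact ⟨hk1, le_trans hk2 htp.2⟩
      obtain ⟨q, hq, rfl⟩ := hsurj hk
      exact ⟨q, ⟨(hF q).mpr hq, hk2⟩, rfl⟩
  rw [← hcardF, himg, Nat.card_Icc]
  omega

/-- The row-reversed reading tableau of a horizontal strip. -/
noncomputable def Trev (l m : ℕ → ℕ) (hfin : (skewCells l m).Finite) : ℕ × ℕ → ℕ :=
  fun p => if p ∈ skewCells l m then (hfin.toFinset.filter (fun q => q.2 ≤ p.2)).card else 0

lemma TrevSpec {l m : ℕ → ℕ} {n : ℕ} (hhs : IsHorizontalStrip (skewCells l m))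
    (hfin : (skewCells l m).Finite) (hcard : (skewCells l m).ncard = n) :
    IsSkewSYT l m n (Trev l m hfin) ∧
      (∀ p ∈ skewCells l m, ∀ q ∈ skewCells l m, Trev l m hfin p < Trev l m hfin q →
        p.2 < q.2) := by
  set S := skewCells l m with hS
  set F := hfin.toFinset with hFdef
  have hF : ∀ q, q ∈ F ↔ q ∈ S := fun q => hfin.mem_toFinset
  have hn : F.card = n := by rw [← hcard, Set.ncard_eq_toFinset_card _ hfin]
  set T := Trev l m hfin with hT
  have hTval : ∀ p ∈ S, T p = (F.filter (fun q => q.2 ≤ p.2)).card := by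
    intro p hp
    simp only [hT, Trev]
    exact if_pos hp
  have hT0 : ∀ p, p ∉ S → T p = 0 := by
    intro p hp
    simp only [hT, Trev]
    exact if_neg hp
  have hmono : ∀ p ∈ S, ∀ q ∈ S, p.2 < q.2 → T p < T q := by
    intro p hp q hq h
    rw [hTval p hp, hTval q hq]
    apply Finset.card_lt_card
    constructor
    · intro x hx
      simp only [Finset.mem_filter] at hx ⊢
      exact ⟨hx.1, le_trans hx.2 (le_of_lt h)⟩
    · intro hc
      have hq' : q ∈ F.filter (fun r => r.2 ≤ q.2) := by
        simp only [Finset.mem_filter]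
        exact ⟨(hF q).mpr hq, le_refl _⟩
      have := hc hq'
      simp only [Finset.mem_filter] at this
      omega
  have hanti : ∀ p ∈ S, ∀ q ∈ S, q.2 ≤ p.2 → T q ≤ T p := by
    intro p hp q hq h
    rw [hTval p hp, hTval q hq]
    apply Finset.card_le_card
    intro x hx
    simp only [Finset.mem_filter] at hx ⊢
    exact ⟨hx.1, le_trans hx.2 h⟩
  have hpos : ∀ p ∈ S, ∀ q ∈ S, T p < T q → p.2 < q.2 := by
    intro p hp q hq h
    by_contra hc
    push_neg at hc
    have := hanti p hp q hq hc
    omega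
  have hinj : Set.InjOn T S := by
    intro p hp q hq h
    rcases lt_trichotomy p.2 q.2 with h1 | h1 | h1
    · have := hmono p hp q hq h1; omega
    · exact hhs p hp q hq h1
    · have := hmono q hq p hp h1; omega
  have hmap : Set.MapsTo T S (Set.Icc 1 n) := by
    intro p hp
    rw [Set.mem_Icc, hTval p hp]
    constructor
    · rw [Nat.one_le_iff_ne_zero, ← Nat.pos_iff_ne_zero, Finset.card_pos]
      exact ⟨p, by simp only [Finset.mem_filter]; exact ⟨(hF p).mpr hp, le_refl _⟩⟩
    · rw [← hn]
      exact Finset.card_le_card (Finset.filter_subset _ _)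
  have hsurj : Set.SurjOn T S (Set.Icc 1 n) := by
    have himg : F.image T = Finset.Icc 1 n := by
      apply Finset.eq_of_subset_of_card_le
      · intro k hk
        simp only [Finset.mem_image] at hk
        obtain ⟨q, hq, rfl⟩ := hk
        have := hmap ((hF q).mp hq)
        simp only [Set.mem_Icc] at this
        simp only [Finset.mem_Icc]
        exact this
      · rw [Nat.card_Icc]
        have : (F.image T).card = F.card := by
          apply Finset.card_image_of_injOn
          intro x hx y hy hxy
          exact hinj ((hF x).mp hx) ((hF y).mp hy) hxy
        omega
    intro k hk
    have hk' : k ∈ Finset.Icc 1 n := by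
      simp only [Finset.mem_Icc]; simp only [Set.mem_Icc] at hk; exact hk
    rw [← himg, Finset.mem_image] at hk'
    obtain ⟨q, hq, rfl⟩ := hk'
    exact ⟨q, (hF q).mp hq, rfl⟩
  refine ⟨⟨⟨hmap, hinj, hsurj⟩, hT0, ?_, ?_⟩, hpos⟩
  · intro p hp q hq _ h2
    exact hmono p hp q hq h2
  · intro p hp q hq h1 h2
    have := hhs p hp q hq h1
    subst this
    omega

end StripAux

/-- Let `μ ⊆ λ` with `λ ⊢ b`, `μ ⊢ a`.  If `λ/μ` is not a horizontal strip then every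
standard skew tableau of shape `λ/μ` has entries `i < j` with negative axial distance
`a(j,i)`.  Conversely, if `λ/μ` is a horizontal strip, there is a unique standard skew
tableau all of whose axial distances `a(j,i)` (for entries `i < j`) are positive,
namely the tableau `T^rev` in which entries increase from left to right. -/
theorem stmt10 (a b : ℕ) (hab : a ≤ b) (l m : ℕ → ℕ)
    (hl : IsPartitionOfSize l b) (hm : IsPartitionOfSize m a) (hsub : SubDiagram m l) :
    (¬ IsHorizontalStrip (skewCells l m) →
      ∀ t, IsSkewSYT l m (b - a) t →
        ∃ p ∈ skewCells l m, ∃ q ∈ skewCells l m, t p < t q ∧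
          ((q.2 : ℤ) - (q.1 : ℤ)) - ((p.2 : ℤ) - (p.1 : ℤ)) < 0) ∧
    (IsHorizontalStrip (skewCells l m) →
      (∃! t, IsSkewSYT l m (b - a) t ∧
        ∀ p ∈ skewCells l m, ∀ q ∈ skewCells l m, t p < t q →
          0 < ((q.2 : ℤ) - (q.1 : ℤ)) - ((p.2 : ℤ) - (p.1 : ℤ))) ∧
      (∀ t, (IsSkewSYT l m (b - a) t ∧
          ∀ p ∈ skewCells l m, ∀ q ∈ skewCells l m, t p < t q →
            0 < ((q.2 : ℤ) - (q.1 : ℤ)) - ((p.2 : ℤ) - (p.1 : ℤ))) →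
        ∀ p ∈ skewCells l m, ∀ q ∈ skewCells l m, p.2 < q.2 → t p < t q)) := by
  have hanti : Antitone l := hl.1.1
  have hfinl : (cells l).Finite := cellsFinite hl.1
  have hsubc : cells m ⊆ cells l := by
    rintro ⟨u, v⟩ h
    simp only [cells, Set.mem_setOf_eq] at h ⊢
    exact lt_of_lt_of_le h (hsub u)
  have hfin : (skewCells l m).Finite := hfinl.subset Set.diff_subset
  have hcard : (skewCells l m).ncard = b - a := by
    rw [skewCells, Set.ncard_diff hsubc (hfinl.subset hsubc), hl.2, hm.2]
  constructor
  · -- not a horizontal strip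
    intro hnhs t ht
    simp only [IsHorizontalStrip, not_forall] at hnhs
    obtain ⟨p, hp, q, hq, hcol, hne⟩ := hnhs
    have hrow : p.1 ≠ q.1 := by
      intro h
      exact hne (Prod.ext h hcol)
    rcases Nat.lt_or_ge p.1 q.1 with h1 | h1
    · refine ⟨p, hp, q, hq, ht.2.2.2 p hp q hq hcol h1, ?_⟩
      have : (p.1 : ℤ) < q.1 := by exact_mod_cast h1
      have : (p.2 : ℤ) = q.2 := by exact_mod_cast hcol
      omega
    · have h1 : q.1 < p.1 := by omega
      refine ⟨q, hq, p, hp, ht.2.2.2 q hq p hp hcol.symm h1, ?_⟩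
      have : (q.1 : ℤ) < p.1 := by exact_mod_cast h1
      have : (p.2 : ℤ) = q.2 := by exact_mod_cast hcol
      omega
  · -- horizontal strip
    intro hhs
    obtain ⟨hsyt, hposT⟩ := TrevSpec hhs hfin hcard
    constructor
    · refine ⟨Trev l m hfin, ⟨hsyt, ?_⟩, ?_⟩
      · intro p hp q hq hlt
        have := contentOfCol hanti hhs p hp q hq (hposT p hp q hq hlt)
        omega
      · -- uniqueness
        rintro t' ⟨ht', hpos'⟩
        have hpcol : ∀ p ∈ skewCells l m, ∀ q ∈ skewCells l m, t' p < t' q → p.2 < q.2 := by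
          intro p hp q hq h
          have := hpos' p hp q hq h
          exact colOfContent hanti hhs p hp q hq (by omega)
        funext p
        by_cases hp : p ∈ skewCells l m
        · rw [keyVal hhs hfin ht' hpcol p hp, keyVal hhs hfin hsyt hposT p hp]
        · rw [ht'.2.1 p hp, hsyt.2.1 p hp]
    · -- second bullet
      rintro t ⟨ht, hpos'⟩ p hp q hq h
      have hpcol : ∀ p ∈ skewCells l m, ∀ q ∈ skewCells l m, t p < t q → p.2 < q.2 := by
        intro p hp q hq h
        have := hpos' p hp q hq h
        exact colOfContent hanti hhs p hp q hq (by omega)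
      exact monoOfPos ht.1.2.1 hpcol p hp q hq h
end

section
/- Let k be a field of characteristic zero and let Hom_FI(a−1, b) ↑ denote the S_b × S_a-module induced from the S_b × S_{a−1}-permutation module on injections Fin (a−1) ↪ Fin b along S_{a−1} ⊆ S_a, for 1 ≤ a ≤ b. A simple S_b × S_a-module S^λ ⊠ S^ν that occurs in k[Hom_FI(a,b)] fails to occur as a composition factor of Hom_FI(a−1,b) ↑ if and only if ν = λ̄ and λ_1 = b − a. -/
open scoped Classical

open Equiv

/-- `Fin a` is equivalent to the subtype of `Fin b` of elements `< a`. -/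
def finCastEquiv (a b : ℕ) (hab : a ≤ b) : Fin a ≃ {x : Fin b // (x : ℕ) < a} where
  toFun i := ⟨⟨i, lt_of_lt_of_le i.isLt hab⟩, i.isLt⟩
  invFun x := ⟨x.1, x.2⟩
  left_inv _ := rfl
  right_inv _ := rfl

/-- The inclusion `S_a ⊆ S_b` (extending a permutation of `{0,…,a-1}` by the identity). -/
def extPerm {a b : ℕ} (hab : a ≤ b) : Equiv.Perm (Fin a) →* Equiv.Perm (Fin b) :=
  Equiv.Perm.extendDomainHom (finCastEquiv a b hab)

/-- `(g,h) • f = g ∘ f ∘ h⁻¹` on injections `Fin a ↪ Fin b`. -/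
def injSmul {a b : ℕ} (g : Equiv.Perm (Fin b) × Equiv.Perm (Fin a))
    (f : Fin a ↪ Fin b) : Fin a ↪ Fin b :=
  ((g.2⁻¹.toEmbedding).trans f).trans g.1.toEmbedding

@[simp] theorem injSmul_apply {a b : ℕ} (g : Equiv.Perm (Fin b) × Equiv.Perm (Fin a))
    (f : Fin a ↪ Fin b) (x : Fin a) : injSmul g f x = g.1 (f (g.2⁻¹ x)) := rfl

/-- The action of `S_b × S_a` on injections `Fin a ↪ Fin b`. -/
instance injMulAction (a b : ℕ) :
    MulAction (Equiv.Perm (Fin b) × Equiv.Perm (Fin a)) (Fin a ↪ Fin b) where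
  smul := injSmul
  one_smul f := Function.Embedding.ext fun x => by
    show injSmul 1 f x = f x
    simp
  mul_smul g h f := Function.Embedding.ext fun x => by
    show injSmul _ f _ = injSmul g (injSmul h f) x
    simp [Equiv.Perm.mul_apply, mul_inv_rev]

theorem injSmul_def (a b : ℕ) (g : Equiv.Perm (Fin b) × Equiv.Perm (Fin a))
    (f : Fin a ↪ Fin b) : g • f = injSmul g f := rfl

open Equiv TensorProduct

/-- Functions `Fin n → ℕ` whose fiber over `j` has cardinality `l j`; the `S_n`-set whose
permutation module is the Young module `M^l` (induced from the trivial module of the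
Young subgroup of shape `l`). -/
def YoungSet (n : ℕ) (l : ℕ → ℕ) : Type :=
  {f : Fin n → ℕ // ∀ j, (Finset.univ.filter (fun i => f i = j)).card = l j}

instance youngAction (n : ℕ) (l : ℕ → ℕ) :
    MulAction (Equiv.Perm (Fin n)) (YoungSet n l) where
  smul g f := ⟨fun i => f.1 (g⁻¹ i), by
    intro j
    rw [← f.2 j]
    apply Finset.card_bij (fun i _ => g⁻¹ i)
    · intro i hi
      simp only [Finset.mem_filter, Finset.mem_univ, true_and] at hi ⊢
      exact hi
    · intro i _ i' _ h
      exact g⁻¹.injective h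
    · intro i hi
      simp only [Finset.mem_filter, Finset.mem_univ, true_and] at hi ⊢
      exact ⟨g i, by simpa using hi, by simp⟩⟩
  one_smul f := Subtype.ext (funext fun i => by
    show f.1 ((1 : Equiv.Perm (Fin n))⁻¹ i) = f.1 i
    simp)
  mul_smul g h f := Subtype.ext (funext fun i => by
    show f.1 ((g * h)⁻¹ i) = f.1 (h⁻¹ (g⁻¹ i))
    simp [mul_inv_rev, Equiv.Perm.mul_apply])

/-- The (characterizing) property of being the Specht module `S^l` of `S_n` over `k`:
an irreducible module admitting a nonzero equivariant map to the Young permutation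
module `M^l`, and a nonzero sign-twisted equivariant map to `M^{lᵗ}`.  In characteristic
zero this characterizes `S^l` up to isomorphism, with the convention that `S^{(n)}` is
trivial and `S^{(1ⁿ)}` is the sign representation. -/
def IsSpechtRep (k : Type) [Field k] {n : ℕ} {V : Type} [AddCommGroup V] [Module k V]
    (ρ : Representation k (Equiv.Perm (Fin n)) V) (l : ℕ → ℕ) : Prop :=
  IsSimpleModule (MonoidAlgebra k (Equiv.Perm (Fin n))) ρ.asModule ∧
  (∃ φ : V →ₗ[k] (YoungSet n l →₀ k), φ ≠ 0 ∧
    ∀ g v, φ (ρ g v) =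
      MonoidAlgebra.coeffLinearEquiv k (Representation.ofMulAction k (Equiv.Perm (Fin n)) (YoungSet n l) g
        ((MonoidAlgebra.coeffLinearEquiv k).symm (φ v)))) ∧
  (∃ ψ : V →ₗ[k] (YoungSet n (transposeP l) →₀ k), ψ ≠ 0 ∧
    ∀ g v, ψ (ρ g v) = ((Equiv.Perm.sign g : ℤ) : k) •
      MonoidAlgebra.coeffLinearEquiv k (Representation.ofMulAction k (Equiv.Perm (Fin n)) (YoungSet n (transposeP l)) g
        ((MonoidAlgebra.coeffLinearEquiv k).symm (ψ v))))

/-- The exterior tensor product `ρ ⊠ σ` of representations of `G` and `H`,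
a representation of `G × H`. -/
noncomputable def boxtimes {k G H V W : Type} [CommRing k] [Monoid G] [Monoid H]
    [AddCommGroup V] [Module k V] [AddCommGroup W] [Module k W]
    (ρ : Representation k G V) (σ : Representation k H W) :
    Representation k (G × H) (TensorProduct k V W) :=
  Representation.tprod (ρ.comp (MonoidHom.fst G H)) (σ.comp (MonoidHom.snd G H))

/-- The submodule of vectors invariant under the action of a subset `S` of the group. -/
def invariantsUnder {k G V : Type} [CommRing k] [Monoid G] [AddCommGroup V] [Module k V]
    (ρ : Representation k G V) (S : Set G) : Submodule k V where
  carrier := {v | ∀ g ∈ S, ρ g v = v}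
  add_mem' := by
    intro x y hx hy g hg
    rw [map_add, hx g hg, hy g hg]
  zero_mem' := by
    intro g hg
    rw [map_zero]
  smul_mem' := by
    intro c x hx g hg
    rw [map_smul, hx g hg]


section AuxStmt14

open Equiv Finsupp

variable {k : Type} [Field k]

lemma ofMA_single {G H : Type} [Group G] [MulAction G H] (g : G) (x : H) (r : k) :
    MonoidAlgebra.coeffLinearEquiv k (Representation.ofMulAction k G H g
      ((MonoidAlgebra.coeffLinearEquiv k).symm (Finsupp.single x r))) = Finsupp.single (g • x) r := by
  simp only [MonoidAlgebra.coeffLinearEquiv_symm_apply, MonoidAlgebra.ofCoeff_single,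
    Representation.ofMulAction_single, MonoidAlgebra.coeffLinearEquiv_apply,
    MonoidAlgebra.coeff_single]

lemma ofMA_apply {G H : Type} [Group G] [MulAction G H] (g : G) (f : H →₀ k) (y : H) :
    MonoidAlgebra.coeffLinearEquiv k (Representation.ofMulAction k G H g
      ((MonoidAlgebra.coeffLinearEquiv k).symm f)) (g • y) = f y := by
  simp [Representation.coeff_ofMulAction]

/-! ### Partition combinatorics -/

lemma part_lt_transposeP_iff {m : ℕ → ℕ} (hm : IsPartition m) (j t : ℕ) :
    t < transposeP m j ↔ j < m t := by
  obtain ⟨hanti, N, hN⟩ := hm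
  classical
  have hsub : {i | j < m i} = ↑((Finset.range N).filter (fun i => j < m i)) := by
    ext i
    simp only [Set.mem_setOf_eq, Finset.coe_filter, Finset.mem_range, Set.mem_setOf_eq]
    constructor
    · intro hi
      refine ⟨?_, hi⟩
      by_contra hiN
      have := hN i (le_of_not_gt hiN)
      omega
    · exact fun h => h.2
  have hcard : transposeP m j = ((Finset.range N).filter (fun i => j < m i)).card := by
    rw [transposeP, hsub, Set.ncard_coe_finset]
  set F := (Finset.range N).filter (fun i => j < m i) with hF
  have hmemF : ∀ i, i ∈ F ↔ j < m i := by
    intro i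
    simp only [hF, Finset.mem_filter, Finset.mem_range]
    constructor
    · exact fun h => h.2
    · intro hi
      refine ⟨?_, hi⟩
      by_contra hiN
      have := hN i (le_of_not_gt hiN)
      omega
  rw [hcard]
  constructor
  · intro ht
    by_contra hjt
    have hFsub : F ⊆ Finset.range t := by
      intro i hi
      rw [hmemF] at hi
      rw [Finset.mem_range]
      by_contra hit
      have : m i ≤ m t := hanti (le_of_not_gt hit)
      omega
    have := Finset.card_le_card hFsub
    simp only [Finset.card_range] at this
    omega
  · intro hjm
    have hsub2 : Finset.range (t+1) ⊆ F := by
      intro i hi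
      rw [Finset.mem_range] at hi
      rw [hmemF]
      have : m t ≤ m i := hanti (by omega)
      omega
    have := Finset.card_le_card hsub2
    simp only [Finset.card_range] at this
    omega

lemma part_transposeP_pos_iff {m : ℕ → ℕ} (hm : IsPartition m) (j : ℕ) :
    0 < transposeP m j ↔ j < m 0 := part_lt_transposeP_iff hm j 0

lemma isPartition_rowBar {l : ℕ → ℕ} (hl : IsPartition l) : IsPartition (rowBar l) := by
  obtain ⟨hanti, N, hN⟩ := hl
  exact ⟨fun i j hij => hanti (by omega), N, fun i hi => hN _ (by omega)⟩

lemma transposeP_rowBar {l : ℕ → ℕ} (hl : IsPartition l) {j : ℕ} (hj : j < l 0) :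
    transposeP l j = transposeP (rowBar l) j + 1 := by
  have h1 : ∀ t, t < transposeP (rowBar l) j ↔ t + 1 < transposeP l j := by
    intro t
    rw [part_lt_transposeP_iff (isPartition_rowBar hl) j t, part_lt_transposeP_iff hl j (t+1)]
    rfl
  have h0 : 0 < transposeP l j := (part_lt_transposeP_iff hl j 0).2 hj
  by_contra hne
  rcases Nat.lt_or_ge (transposeP l j) (transposeP (rowBar l) j + 1) with hlt | hge
  · have := (h1 (transposeP l j - 1)).1 (by omega)
    omega
  · have := (h1 (transposeP (rowBar l) j)).2 (by omega)
    omega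

/-- Double counting: `∑_{j<N} min (r+1) (μᵀ j) = ∑_{t≤r} μ t` for a partition `μ`. -/
lemma sum_min_transposeP {μ : ℕ → ℕ} (hμ : IsPartition μ) (r N : ℕ) (hN : μ 0 ≤ N) :
    ∑ j ∈ Finset.range N, min (r+1) (transposeP μ j) = ∑ t ∈ Finset.range (r+1), μ t := by
  classical
  have key : ∀ j, min (r+1) (transposeP μ j)
      = ((Finset.range (r+1)).filter (fun t => t < transposeP μ j)).card := by
    intro j
    have : (Finset.range (r+1)).filter (fun t => t < transposeP μ j)
        = Finset.range (min (r+1) (transposeP μ j)) := by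
      ext t
      simp only [Finset.mem_filter, Finset.mem_range, lt_min_iff]
      try omega
    rw [this, Finset.card_range]
  have key2 : ∀ t, t < r + 1 →
      ((Finset.range N).filter (fun j => t < transposeP μ j)).card = μ t := by
    intro t _
    have : (Finset.range N).filter (fun j => t < transposeP μ j) = Finset.range (μ t) := by
      ext j
      simp only [Finset.mem_filter, Finset.mem_range]
      rw [part_lt_transposeP_iff hμ]
      have : μ t ≤ μ 0 := hμ.1 (Nat.zero_le t)
      omega
    rw [this, Finset.card_range]
  calc ∑ j ∈ Finset.range N, min (r+1) (transposeP μ j)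
      = ∑ j ∈ Finset.range N, ∑ t ∈ Finset.range (r+1),
          (if t < transposeP μ j then 1 else 0) := by
        refine Finset.sum_congr rfl fun j _ => ?_
        rw [key j, Finset.card_filter]
    _ = ∑ t ∈ Finset.range (r+1), ∑ j ∈ Finset.range N,
          (if t < transposeP μ j then 1 else 0) := Finset.sum_comm
    _ = ∑ t ∈ Finset.range (r+1), μ t := by
        refine Finset.sum_congr rfl fun t ht => ?_
        rw [← Finset.card_filter, key2 t (Finset.mem_range.1 ht)]


/-! ### Fin / permutation infrastructure -/

variable {a b : ℕ}

/-- The standard inclusion `Fin a ↪ Fin b`. -/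
noncomputable def stdEmb (hab : a ≤ b) : Fin a ↪ Fin b := Fin.castLEEmb hab

@[simp] lemma stdEmb_val (hab : a ≤ b) (i : Fin a) : ((stdEmb hab i : Fin b) : ℕ) = (i : ℕ) := rfl

lemma extPerm_apply_lt (hab : a ≤ b) (h : Equiv.Perm (Fin a)) (p : Fin b) (hp : (p : ℕ) < a) :
    extPerm hab h p = stdEmb hab (h ⟨p, hp⟩) := by
  have : extPerm hab h p = _ :=
    Equiv.Perm.extendDomain_apply_subtype (e := h) (f := finCastEquiv a b hab) hp
  rw [this]
  rfl

lemma extPerm_apply_ge (hab : a ≤ b) (h : Equiv.Perm (Fin a)) (p : Fin b) (hp : a ≤ (p : ℕ)) :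
    extPerm hab h p = p :=
  Equiv.Perm.extendDomain_apply_not_subtype (e := h) (f := finCastEquiv a b hab)
    (show ¬((p : ℕ) < a) by omega)

lemma extPerm_std (hab : a ≤ b) (h : Equiv.Perm (Fin a)) (i : Fin a) :
    extPerm hab h (stdEmb hab i) = stdEmb hab (h i) := by
  rw [extPerm_apply_lt hab h _ (by simpa using i.isLt)]
  congr

lemma sign_extPerm (hab : a ≤ b) (h : Equiv.Perm (Fin a)) :
    Equiv.Perm.sign (extPerm hab h) = Equiv.Perm.sign h :=
  Equiv.Perm.sign_extendDomain h (finCastEquiv a b hab)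

lemma extPerm_inv (hab : a ≤ b) (h : Equiv.Perm (Fin a)) :
    (extPerm hab h)⁻¹ = extPerm hab h⁻¹ := by
  rw [← map_inv]

/-- Any two embeddings `Fin n ↪ Fin b` differ by a permutation of `Fin b`. -/
lemma exists_perm_comp {n : ℕ} (F F' : Fin n ↪ Fin b) :
    ∃ g : Equiv.Perm (Fin b), ∀ i, g (F i) = F' i := by
  classical
  have hcard : Fintype.card (Set.range F) = Fintype.card (Set.range F') := by
    rw [Set.card_range_of_injective F.injective, Set.card_range_of_injective F'.injective]
  have hcardc : Fintype.card ↥(Set.range ⇑F)ᶜ = Fintype.card ↥(Set.range ⇑F')ᶜ := by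
    rw [Fintype.card_compl_set, Fintype.card_compl_set, hcard]
  let e₁ : Fin n ≃ Set.range F := Equiv.ofInjective F F.injective
  let e₂ : Fin n ≃ Set.range F' := Equiv.ofInjective F' F'.injective
  let ec : ↥(Set.range ⇑F)ᶜ ≃ ↥(Set.range ⇑F')ᶜ := Fintype.equivOfCardEq hcardc
  let g : Equiv.Perm (Fin b) :=
    ((Equiv.sumCompl (· ∈ Set.range F)).symm.trans
      (Equiv.sumCongr (e₁.symm.trans e₂) ec)).trans (Equiv.sumCompl (· ∈ Set.range F'))
  refine ⟨g, fun i => ?_⟩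
  have hmem : F i ∈ Set.range F := ⟨i, rfl⟩
  show (Equiv.sumCompl (· ∈ Set.range F')) ((Equiv.sumCongr (e₁.symm.trans e₂) ec)
    ((Equiv.sumCompl (· ∈ Set.range F)).symm (F i))) = F' i
  rw [Equiv.sumCompl_symm_apply_of_pos hmem]
  simp only [Equiv.sumCongr_apply, Sum.map_inl, Equiv.sumCompl_apply_inl, Equiv.trans_apply]
  have : e₁.symm ⟨F i, hmem⟩ = i := by
    apply e₁.injective
    simp only [Equiv.apply_symm_apply]
    rfl
  rw [this]
  rfl

/-- positions `≥ a` in `Fin b` -/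
noncomputable def dSet (a : ℕ) (b : ℕ) : Finset (Fin b) :=
  Finset.univ.filter (fun p : Fin b => a ≤ (p : ℕ))

lemma mem_dSet {p : Fin b} : p ∈ dSet a b ↔ a ≤ (p : ℕ) := by
  simp [dSet]

lemma dSet_card (hab : a ≤ b) : (dSet a b).card = b - a := by
  classical
  have : dSet a b = Finset.univ.image (fun i : Fin (b-a) => (⟨a + i, by omega⟩ : Fin b)) := by
    ext p
    simp only [mem_dSet, Finset.mem_image, Finset.mem_univ, true_and]
    constructor
    · intro hp
      exact ⟨⟨(p : ℕ) - a, by omega⟩, by apply Fin.ext; simp; omega⟩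
    · rintro ⟨i, rfl⟩
      simp
  rw [this, Finset.card_image_of_injective _ (fun i j hij => by
    have := Fin.val_eq_of_eq hij
    apply Fin.ext
    simpa using this), Finset.card_univ, Fintype.card_fin]

lemma youngSmul_apply {n : ℕ} {l : ℕ → ℕ} (g : Equiv.Perm (Fin n)) (T : YoungSet n l)
    (p : Fin n) : (g • T).1 p = T.1 (g⁻¹ p) := rfl

lemma youngSmul_eq_self {n : ℕ} {l : ℕ → ℕ} (g : Equiv.Perm (Fin n)) (T : YoungSet n l)
    (h : ∀ p, T.1 (g⁻¹ p) = T.1 p) : g • T = T :=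
  Subtype.ext (funext h)

lemma youngSet_fiber_card {n : ℕ} {l : ℕ → ℕ} (T : YoungSet n l) (j : ℕ) :
    (Finset.univ.filter (fun p => T.1 p = j)).card = l j := T.2 j

lemma youngSet_val_lt {n : ℕ} {l : ℕ → ℕ} (hl : IsPartition l) (T : YoungSet n (transposeP l))
    (p : Fin n) : T.1 p < l 0 := by
  rw [← part_transposeP_pos_iff hl, ← youngSet_fiber_card T (T.1 p)]
  rw [Finset.card_pos]
  exact ⟨p, by simp⟩


/-! ### Linear algebra plumbing -/

/-- A nonzero map out of a simple representation whose kernel is invariant is injective. -/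
lemma injective_of_simple {G V M : Type} [Group G] [AddCommGroup V] [Module k V]
    [AddCommGroup M] [Module k M] (ρ : Representation k G V)
    (hsim : IsSimpleModule (MonoidAlgebra k G) ρ.asModule)
    (φ : V →ₗ[k] M) (hne : φ ≠ 0) (hker : ∀ g v, φ v = 0 → φ (ρ g v) = 0) :
    Function.Injective φ := by
  classical
  have hsmul : ∀ (r : MonoidAlgebra k G) (v : V), φ v = 0 → φ (ρ.asAlgebraHom r v) = 0 := by
    intro r v hv
    induction r using MonoidAlgebra.induction_linear with
    | zero => simp [hv]
    | add f g hf hg => rw [map_add, LinearMap.add_apply, map_add, hf, hg, add_zero]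
    | single g c =>
      rw [Representation.asAlgebraHom_single]
      simp only [LinearMap.smul_apply, map_smul]
      rw [hker g v hv, smul_zero]
  let N : Submodule (MonoidAlgebra k G) ρ.asModule :=
    { carrier := {v : ρ.asModule | φ (ρ.asModuleEquiv v) = 0}
      add_mem' := fun {x y} hx hy => by
        simp only [Set.mem_setOf_eq, map_add] at *
        rw [hx, hy, add_zero]
      zero_mem' := by simp only [Set.mem_setOf_eq, map_zero]
      smul_mem' := fun r x hx => by
        simp only [Set.mem_setOf_eq] at *
        rw [Representation.asModuleEquiv_map_smul]
        exact hsmul r (ρ.asModuleEquiv x) hx }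
  rcases hsim.eq_bot_or_eq_top N with hbot | htop
  · intro x y hxy
    have hx : φ (x - y) = 0 := by rw [map_sub, hxy, sub_self]
    have hmem : (ρ.asModuleEquiv.symm (x - y)) ∈ N := by
      show φ (ρ.asModuleEquiv (ρ.asModuleEquiv.symm (x - y))) = 0
      rw [LinearEquiv.apply_symm_apply]
      exact hx
    rw [hbot] at hmem
    have h0 := (Submodule.mem_bot _).1 hmem
    have h1 : x - y = 0 := by
      have := congrArg ρ.asModuleEquiv h0
      rwa [LinearEquiv.apply_symm_apply, map_zero] at this
    exact sub_eq_zero.1 h1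
  · exfalso
    apply hne
    ext v
    have hmem : (ρ.asModuleEquiv.symm v) ∈ N := by rw [htop]; trivial
    have h2 : φ (ρ.asModuleEquiv (ρ.asModuleEquiv.symm v)) = 0 := hmem
    rwa [LinearEquiv.apply_symm_apply] at h2

lemma tensorMap_injective {V W M N : Type} [AddCommGroup V] [Module k V] [AddCommGroup W]
    [Module k W] [AddCommGroup M] [Module k M] [AddCommGroup N] [Module k N]
    (α : V →ₗ[k] M) (β : W →ₗ[k] N) (hα : Function.Injective α) (hβ : Function.Injective β) :
    Function.Injective (TensorProduct.map α β) := by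
  obtain ⟨α', hα'⟩ := α.exists_leftInverse_of_injective (LinearMap.ker_eq_bot.2 hα)
  obtain ⟨β', hβ'⟩ := β.exists_leftInverse_of_injective (LinearMap.ker_eq_bot.2 hβ)
  intro x y hxy
  have h2 : ∀ z : TensorProduct k V W, TensorProduct.map α' β' (TensorProduct.map α β z) = z := by
    intro z
    have : TensorProduct.map α' β' (TensorProduct.map α β z)
        = TensorProduct.map (α'.comp α) (β'.comp β) z := by
      rw [TensorProduct.map_comp]
      rfl
    rw [this, hα', hβ', TensorProduct.map_id]
    rfl
  rw [← h2 x, ← h2 y, hxy]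

/-- The "picture" map: compose a tensor product of intertwiners with the identification
of the tensor product of two free modules with the free module on the product. -/
noncomputable def pic {a b : ℕ} {V W : Type} [AddCommGroup V] [Module k V]
    [AddCommGroup W] [Module k W] {A B : ℕ → ℕ}
    (α : V →ₗ[k] (YoungSet b A →₀ k)) (β : W →ₗ[k] (YoungSet a B →₀ k)) :
    TensorProduct k V W →ₗ[k] (YoungSet b A × YoungSet a B →₀ k) :=
  (finsuppTensorFinsupp' k (YoungSet b A) (YoungSet a B)).toLinearMap.comp
    (TensorProduct.map α β)

lemma pic_injective {a b : ℕ} {V W : Type} [AddCommGroup V] [Module k V]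
    [AddCommGroup W] [Module k W] {A B : ℕ → ℕ}
    (α : V →ₗ[k] (YoungSet b A →₀ k)) (β : W →ₗ[k] (YoungSet a B →₀ k))
    (hα : Function.Injective α) (hβ : Function.Injective β) :
    Function.Injective (pic α β) := by
  intro x y hxy
  exact tensorMap_injective α β hα hβ
    ((finsuppTensorFinsupp' k _ _).injective hxy)

lemma pic_coeff {a b : ℕ} {V W : Type} [AddCommGroup V] [Module k V]
    [AddCommGroup W] [Module k W] {A B : ℕ → ℕ}
    (ρ : Representation k (Equiv.Perm (Fin b)) V) (σ : Representation k (Equiv.Perm (Fin a)) W)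
    (α : V →ₗ[k] (YoungSet b A →₀ k)) (β : W →ₗ[k] (YoungSet a B →₀ k))
    (cα : Equiv.Perm (Fin b) → k) (cβ : Equiv.Perm (Fin a) → k)
    (hα : ∀ g v, α (ρ g v) =
      cα g • (MonoidAlgebra.coeffLinearEquiv k (Representation.ofMulAction k (Equiv.Perm (Fin b)) (YoungSet b A) g
        ((MonoidAlgebra.coeffLinearEquiv k).symm (α v)))))
    (hβ : ∀ h w, β (σ h w) =
      cβ h • (MonoidAlgebra.coeffLinearEquiv k (Representation.ofMulAction k (Equiv.Perm (Fin a)) (YoungSet a B) h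
        ((MonoidAlgebra.coeffLinearEquiv k).symm (β w)))))
    (g : Equiv.Perm (Fin b)) (h : Equiv.Perm (Fin a)) (t : TensorProduct k V W)
    (T : YoungSet b A) (S : YoungSet a B) :
    pic α β ((boxtimes ρ σ) (g, h) t) (g • T, h • S) = cα g * cβ h * pic α β t (T, S) := by
  have hbox : (boxtimes ρ σ) (g, h) = TensorProduct.map (ρ g) (σ h) := by
    rw [boxtimes, Representation.tprod_apply]
    rfl
  rw [hbox]
  induction t using TensorProduct.induction_on with
  | zero => simp
  | add x y hx hy =>
    rw [map_add, map_add, map_add, Finsupp.add_apply, Finsupp.add_apply, hx, hy, mul_add]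
  | tmul v w =>
    rw [TensorProduct.map_tmul]
    show (finsuppTensorFinsupp' k _ _) (TensorProduct.map α β _) _
      = _ * (finsuppTensorFinsupp' k _ _) (TensorProduct.map α β _) _
    rw [TensorProduct.map_tmul, TensorProduct.map_tmul, hα, hβ,
      finsuppTensorFinsupp'_apply_apply, finsuppTensorFinsupp'_apply_apply]
    simp only [Finsupp.smul_apply, smul_eq_mul]
    have hA := ofMA_apply (k := k) g (α v) T
    have hB := ofMA_apply (k := k) h (β w) S
    rw [hA, hB]
    ring


/-! ### The extension-sum (induction) map -/

lemma mem_range_stdEmb {n : ℕ} (h : n ≤ b) (x : Fin b) :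
    x ∈ Set.range (stdEmb h) ↔ (x : ℕ) < n := by
  constructor
  · rintro ⟨i, rfl⟩
    simpa using i.isLt
  · intro hx
    exact ⟨⟨(x : ℕ), hx⟩, Fin.ext rfl⟩

/-- Extend an embedding `Fin (a-1) ↪ Fin b` by a value `x` outside its range. -/
noncomputable def extEmb (ha : 1 ≤ a) (hab : a ≤ b) (f : Fin (a-1) ↪ Fin b)
    (x : Fin b) (hx : x ∉ Set.range ⇑f) : Fin a ↪ Fin b where
  toFun i := if h : (i : ℕ) < a - 1 then f ⟨i, h⟩ else x
  inj' := by
    intro i j hij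
    dsimp only at hij
    split_ifs at hij with hi hj hj
    · have := f.injective hij
      have := congrArg Fin.val this
      simp only at this
      exact Fin.ext this
    · exact absurd ⟨_, hij⟩ hx
    · exact absurd ⟨_, hij.symm⟩ hx
    · have h1 := i.isLt
      have h2 := j.isLt
      exact Fin.ext (by omega)

lemma extEmb_apply_lt (ha : 1 ≤ a) (hab : a ≤ b) (f : Fin (a-1) ↪ Fin b)
    (x : Fin b) (hx : x ∉ Set.range ⇑f) (i : Fin a) (hi : (i : ℕ) < a - 1) :
    extEmb ha hab f x hx i = f ⟨i, hi⟩ := dif_pos hi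

lemma extEmb_apply_ge (ha : 1 ≤ a) (hab : a ≤ b) (f : Fin (a-1) ↪ Fin b)
    (x : Fin b) (hx : x ∉ Set.range ⇑f) (i : Fin a) (hi : ¬ (i : ℕ) < a - 1) :
    extEmb ha hab f x hx i = x := dif_neg hi

variable (k) in
/-- Sum of all one-point extensions. -/
noncomputable def extSum (ha : 1 ≤ a) (hab : a ≤ b) (f : Fin (a-1) ↪ Fin b) :
    (Fin a ↪ Fin b) →₀ k :=
  ∑ x : {x : Fin b // x ∉ Set.range ⇑f}, Finsupp.single (extEmb ha hab f x.1 x.2) 1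

/-- `(g, extPerm h) • extEmb f x = extEmb ((g,h) • f) (g x)`. -/
lemma smul_extEmb (ha : 1 ≤ a) (hab : a ≤ b) (g : Equiv.Perm (Fin b))
    (h : Equiv.Perm (Fin (a-1))) (f : Fin (a-1) ↪ Fin b) (x : Fin b) (hx : x ∉ Set.range ⇑f)
    (hgx : g x ∉ Set.range ⇑(injSmul (g, h) f)) :
    injSmul (g, extPerm (Nat.sub_le a 1) h) (extEmb ha hab f x hx)
      = extEmb ha hab (injSmul (g, h) f) (g x) hgx := by
  apply Function.Embedding.ext
  intro i
  rw [injSmul_apply]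
  have hinv : ((g, extPerm (Nat.sub_le a 1) h) : Equiv.Perm (Fin b) × Equiv.Perm (Fin a)).2⁻¹ i
      = extPerm (Nat.sub_le a 1) h⁻¹ i := by
    show (extPerm (Nat.sub_le a 1) h)⁻¹ i = _
    rw [extPerm_inv]
  rw [hinv]
  by_cases hi : (i : ℕ) < a - 1
  · have hlt : extPerm (Nat.sub_le a 1) h⁻¹ i = stdEmb (Nat.sub_le a 1) (h⁻¹ ⟨i, hi⟩) :=
      extPerm_apply_lt _ _ _ hi
    rw [hlt]
    have hval : ((stdEmb (Nat.sub_le a 1) (h⁻¹ ⟨i, hi⟩) : Fin a) : ℕ) = (h⁻¹ ⟨i, hi⟩ : ℕ) := rfl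
    have hlt2 : ((stdEmb (Nat.sub_le a 1) (h⁻¹ ⟨i, hi⟩) : Fin a) : ℕ) < a - 1 := by
      rw [hval]; exact (h⁻¹ ⟨i, hi⟩).isLt
    rw [extEmb_apply_lt _ _ _ _ _ _ hlt2, extEmb_apply_lt _ _ _ _ _ _ hi]
    rw [injSmul_apply]
    have heq : (⟨((stdEmb (Nat.sub_le a 1) (h⁻¹ ⟨i, hi⟩) : Fin a) : ℕ), hlt2⟩ : Fin (a-1))
        = h⁻¹ ⟨i, hi⟩ := Fin.ext rfl
    rw [heq]
  · have hge : extPerm (Nat.sub_le a 1) h⁻¹ i = i :=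
      extPerm_apply_ge _ _ _ (by omega)
    rw [hge, extEmb_apply_ge _ _ _ _ _ _ hi, extEmb_apply_ge _ _ _ _ _ _ hi]

lemma extSum_smul (ha : 1 ≤ a) (hab : a ≤ b) (g : Equiv.Perm (Fin b))
    (h : Equiv.Perm (Fin (a-1))) (f : Fin (a-1) ↪ Fin b) :
    extSum k ha hab (injSmul (g, h) f)
      = MonoidAlgebra.coeffLinearEquiv k (Representation.ofMulAction k (Equiv.Perm (Fin b) × Equiv.Perm (Fin a))
          (Fin a ↪ Fin b) (g, extPerm (Nat.sub_le a 1) h) ((MonoidAlgebra.coeffLinearEquiv k).symm (extSum k ha hab f))) := by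
  rw [extSum, extSum, map_sum, map_sum, map_sum]
  have hmemiff : ∀ x : Fin b, x ∉ Set.range ⇑f ↔ g x ∉ Set.range ⇑(injSmul (g, h) f) := by
    intro x
    rw [not_iff_not]
    constructor
    · rintro ⟨i, rfl⟩
      exact ⟨h i, by rw [injSmul_apply]; simp⟩
    · rintro ⟨i, hi⟩
      rw [injSmul_apply] at hi
      exact ⟨h⁻¹ i, g.injective hi⟩
  let e : {x : Fin b // x ∉ Set.range ⇑f} ≃ {x : Fin b // x ∉ Set.range ⇑(injSmul (g, h) f)} :=
    Equiv.subtypeEquiv g (fun x => hmemiff x)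
  refine (Fintype.sum_equiv e
    (fun x => MonoidAlgebra.coeffLinearEquiv k (Representation.ofMulAction k (Equiv.Perm (Fin b) × Equiv.Perm (Fin a))
      (Fin a ↪ Fin b) (g, extPerm (Nat.sub_le a 1) h)
      ((MonoidAlgebra.coeffLinearEquiv k).symm (Finsupp.single (extEmb ha hab f x.1 x.2) 1))))
    (fun y => Finsupp.single (extEmb ha hab (injSmul (g, h) f) y.1 y.2) 1) ?_).symm
  intro x
  rw [ofMA_single, injSmul_def,
    smul_extEmb ha hab g h f x.1 x.2 ((hmemiff x.1).1 x.2)]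
  rfl


variable (k) in
/-- The induction map `k[Inj(a-1,b)] → k[Inj(a,b)]`. -/
noncomputable def lmapL (ha : 1 ≤ a) (hab : a ≤ b) :
    ((Fin (a-1) ↪ Fin b) →₀ k) →ₗ[k] ((Fin a ↪ Fin b) →₀ k) :=
  Finsupp.lift ((Fin a ↪ Fin b) →₀ k) k (Fin (a-1) ↪ Fin b) (extSum k ha hab)

lemma lmapL_single (ha : 1 ≤ a) (hab : a ≤ b) (f : Fin (a-1) ↪ Fin b) (r : k) :
    lmapL k ha hab (Finsupp.single f r) = r • extSum k ha hab f := by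
  rw [lmapL, Finsupp.lift_apply, Finsupp.sum_single_index (by rw [zero_smul])]

lemma psi0_prop {V W : Type} [AddCommGroup V] [Module k V] [AddCommGroup W] [Module k W]
    (ρ : Representation k (Equiv.Perm (Fin b)) V) (σ : Representation k (Equiv.Perm (Fin a)) W)
    (φ : ((Fin a ↪ Fin b) →₀ k) →ₗ[k] TensorProduct k V W)
    (hφ : ∀ (g : Equiv.Perm (Fin b) × Equiv.Perm (Fin a)) (x : (Fin a ↪ Fin b) →₀ k),
      φ (MonoidAlgebra.coeffLinearEquiv k (Representation.ofMulAction k (Equiv.Perm (Fin b) × Equiv.Perm (Fin a))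
          (Fin a ↪ Fin b) g ((MonoidAlgebra.coeffLinearEquiv k).symm x))) = (boxtimes ρ σ) g (φ x))
    (ha : 1 ≤ a) (hab : a ≤ b)
    (g : Equiv.Perm (Fin b)) (h : Equiv.Perm (Fin (a-1))) (x : (Fin (a-1) ↪ Fin b) →₀ k) :
    (φ.comp (lmapL k ha hab)) (MonoidAlgebra.coeffLinearEquiv k (Representation.ofMulAction k
        (Equiv.Perm (Fin b) × Equiv.Perm (Fin (a-1))) (Fin (a-1) ↪ Fin b) (g, h)
        ((MonoidAlgebra.coeffLinearEquiv k).symm x)))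
      = (boxtimes ρ σ) (g, extPerm (Nat.sub_le a 1) h) ((φ.comp (lmapL k ha hab)) x) := by
  induction x using Finsupp.induction_linear with
  | zero => simp
  | add p q hp hq => simp only [map_add, hp, hq]
  | single f r =>
    rw [ofMA_single, LinearMap.comp_apply, lmapL_single, injSmul_def,
      map_smul, extSum_smul, hφ, LinearMap.comp_apply, lmapL_single, map_smul, map_smul]

lemma extEmb_std_eq (ha : 1 ≤ a) (hab : a ≤ b) (x : Fin b)
    (hx : x ∉ Set.range ⇑(stdEmb (le_trans (Nat.sub_le a 1) hab))) :
    extEmb ha hab (stdEmb (le_trans (Nat.sub_le a 1) hab)) x hx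
      = injSmul (Equiv.swap (⟨a-1, by omega⟩ : Fin b) x, (1 : Equiv.Perm (Fin a)))
          (stdEmb hab) := by
  apply Function.Embedding.ext
  intro i
  rw [injSmul_apply]
  have hxval : a - 1 ≤ (x : ℕ) := by
    rw [mem_range_stdEmb] at hx
    omega
  have h1 : ((1 : Equiv.Perm (Fin a)))⁻¹ i = i := by simp
  rw [h1]
  by_cases hi : (i : ℕ) < a - 1
  · rw [extEmb_apply_lt _ _ _ _ _ _ hi]
    have hne1 : stdEmb hab i ≠ (⟨a-1, by omega⟩ : Fin b) := by
      intro hc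
      have := congrArg Fin.val hc
      simp only [stdEmb_val] at this
      omega
    have hne2 : stdEmb hab i ≠ x := by
      intro hc
      have := congrArg Fin.val hc
      simp only [stdEmb_val] at this
      omega
    rw [Equiv.swap_apply_of_ne_of_ne hne1 hne2]
    exact Fin.ext rfl
  · rw [extEmb_apply_ge _ _ _ _ _ _ hi]
    have hstd : stdEmb hab i = (⟨a-1, by omega⟩ : Fin b) := by
      apply Fin.ext
      have := i.isLt
      simp only [stdEmb_val]
      omega
    rw [hstd, Equiv.swap_apply_left]

lemma extSum_std (ha : 1 ≤ a) (hab : a ≤ b) :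
    extSum k ha hab (stdEmb (le_trans (Nat.sub_le a 1) hab))
      = ∑ x ∈ dSet (a-1) b,
          Finsupp.single (injSmul (Equiv.swap (⟨a-1, by omega⟩ : Fin b) x,
            (1 : Equiv.Perm (Fin a))) (stdEmb hab)) 1 := by
  classical
  rw [extSum]
  rw [Finset.sum_subtype
    (p := fun x : Fin b => x ∉ Set.range ⇑(stdEmb (le_trans (Nat.sub_le a 1) hab)))
    (dSet (a-1) b)
    (fun x => by simp only [mem_dSet, mem_range_stdEmb]; omega)
    (fun x => Finsupp.single (injSmul (Equiv.swap (⟨a-1, by omega⟩ : Fin b) x,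
      (1 : Equiv.Perm (Fin a))) (stdEmb hab)) 1)]
  exact Fintype.sum_congr _ _ (fun x => by rw [extEmb_std_eq ha hab x.1 x.2])


/-! ### Support combinatorics -/

lemma youngSmul_swap_eq {n : ℕ} {l : ℕ → ℕ} (T : YoungSet n l) (p q : Fin n)
    (h : T.1 p = T.1 q) : (Equiv.swap p q) • T = T := by
  apply youngSmul_eq_self
  intro r
  rw [Equiv.swap_inv]
  by_cases hp : r = p
  · rw [hp, Equiv.swap_apply_left, ← h]
  · by_cases hq : r = q
    · rw [hq, Equiv.swap_apply_right, h]
    · rw [Equiv.swap_apply_of_ne_of_ne hp hq]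

lemma sgnk_swap {n : ℕ} (p q : Fin n) (hpq : p ≠ q) :
    ((Equiv.Perm.sign (Equiv.swap p q) : ℤ) : k) = -1 := by
  rw [Equiv.Perm.sign_swap hpq]
  simp

lemma neg_self_zero [CharZero k] {x : k} (h : x = -1 * x) : x = 0 := by
  rw [neg_one_mul] at h
  have h3' : x + x = 0 := by
    nth_rewrite 1 [h]
    rw [neg_add_cancel]
  rw [← two_mul] at h3'
  rcases mul_eq_zero.1 h3' with h3 | h3
  · exact absurd h3 two_ne_zero
  · exact h3

section Comb

variable [CharZero k] {a b : ℕ} {A B : ℕ → ℕ}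
variable (hab : a ≤ b)
variable (u : (YoungSet b A × YoungSet a B) →₀ k)
variable (c : Equiv.Perm (Fin b) → Equiv.Perm (Fin a) → k)

/-- On the support, values of `T` on two positions `≥ a` are distinct (sign-on-`T` pictures). -/
lemma support_TD_distinct
    (hK : ∀ (g : Equiv.Perm (Fin b)) (h : Equiv.Perm (Fin a)),
      (∀ i : Fin a, g (stdEmb hab i) = stdEmb hab (h i)) →
      ∀ T S, u (g • T, h • S) = c g h * u (T, S))
    (hswap : ∀ p q : Fin b, a ≤ (p : ℕ) → a ≤ (q : ℕ) → p ≠ q → c (Equiv.swap p q) 1 = -1)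
    (T : YoungSet b A) (S : YoungSet a B) (hTS : u (T, S) ≠ 0)
    {p q : Fin b} (hp : a ≤ (p : ℕ)) (hq : a ≤ (q : ℕ)) (hpq : p ≠ q) :
    T.1 p ≠ T.1 q := by
  intro hval
  have hcond : ∀ i : Fin a, (Equiv.swap p q) (stdEmb hab i) = stdEmb hab ((1 : Equiv.Perm (Fin a)) i) := by
    intro i
    have h1 : stdEmb hab i ≠ p := by
      intro hc
      have := congrArg Fin.val hc
      simp only [stdEmb_val] at this
      have := i.isLt
      omega
    have h2 : stdEmb hab i ≠ q := by
      intro hc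
      have := congrArg Fin.val hc
      simp only [stdEmb_val] at this
      have := i.isLt
      omega
    rw [Equiv.swap_apply_of_ne_of_ne h1 h2]
    rfl
  have := hK (Equiv.swap p q) 1 hcond T S
  rw [youngSmul_swap_eq T p q hval, one_smul, hswap p q hp hq hpq] at this
  exact hTS (neg_self_zero this)

/-- On the support, within an `S`-fiber the `T`-values at embedded positions are distinct
(for pictures where the diagonal swaps act by `-1`). -/
lemma support_diag_distinct
    (hK : ∀ (g : Equiv.Perm (Fin b)) (h : Equiv.Perm (Fin a)),
      (∀ i : Fin a, g (stdEmb hab i) = stdEmb hab (h i)) →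
      ∀ T S, u (g • T, h • S) = c g h * u (T, S))
    (hdiag : ∀ (q q' : Fin a), q ≠ q' →
      c (extPerm hab (Equiv.swap q q')) (Equiv.swap q q') = -1)
    (T : YoungSet b A) (S : YoungSet a B) (hTS : u (T, S) ≠ 0)
    {q q' : Fin a} (hne : q ≠ q') (hS : S.1 q = S.1 q') :
    T.1 (stdEmb hab q) ≠ T.1 (stdEmb hab q') := by
  intro hT
  set h := Equiv.swap q q' with hh
  have hcond : ∀ i : Fin a, (extPerm hab h) (stdEmb hab i) = stdEmb hab (h i) :=
    extPerm_std hab h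
  have hsmulT : (extPerm hab h) • T = T := by
    apply youngSmul_eq_self
    intro r
    rw [extPerm_inv]
    by_cases hr : (r : ℕ) < a
    · rw [extPerm_apply_lt hab h⁻¹ r hr]
      have hrr : stdEmb hab (⟨(r : ℕ), hr⟩ : Fin a) = r := Fin.ext rfl
      conv_rhs => rw [← hrr]
      set j : Fin a := ⟨(r : ℕ), hr⟩
      have : ∀ i : Fin a, T.1 (stdEmb hab (h⁻¹ i)) = T.1 (stdEmb hab i) := by
        intro i
        rw [hh, Equiv.swap_inv]
        by_cases h1 : i = q
        · rw [h1, Equiv.swap_apply_left, ← hT]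
        · by_cases h2 : i = q'
          · rw [h2, Equiv.swap_apply_right, hT]
          · rw [Equiv.swap_apply_of_ne_of_ne h1 h2]
      exact this j
    · rw [extPerm_apply_ge hab h⁻¹ r (by omega)]
  have hsmulS : h • S = S := by
    apply youngSmul_eq_self
    intro r
    rw [hh, Equiv.swap_inv]
    by_cases h1 : r = q
    · rw [h1, Equiv.swap_apply_left, ← hS]
    · by_cases h2 : r = q'
      · rw [h2, Equiv.swap_apply_right, hS]
      · rw [Equiv.swap_apply_of_ne_of_ne h1 h2]
  have := hK (extPerm hab h) h hcond T S
  rw [hsmulT, hsmulS, hdiag q q' hne] at this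
  exact hTS (neg_self_zero this)


/-- Extremal argument: there is a support element whose `T`-zero-fiber lies in positions `≥ a`. -/
lemma exists_support_good (ha : 1 ≤ a)
    (hK : ∀ (g : Equiv.Perm (Fin b)) (h : Equiv.Perm (Fin a)),
      (∀ i : Fin a, g (stdEmb hab i) = stdEmb hab (h i)) →
      ∀ T S, u (g • T, h • S) = c g h * u (T, S))
    (hcne : ∀ h : Equiv.Perm (Fin a), c (extPerm hab h) h ≠ 0)
    (hSig : ∀ (T : YoungSet b A) (S : YoungSet a B),
      ∑ x ∈ dSet (a-1) b, u ((Equiv.swap (⟨a-1, by omega⟩ : Fin b) x)⁻¹ • T, S) = 0)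
    (hu : u ≠ 0) :
    ∃ T S, u (T, S) ≠ 0 ∧ ∀ p : Fin b, T.1 p = 0 → a ≤ (p : ℕ) := by
  classical
  set cb : Fin b := ⟨a-1, by omega⟩ with hcb
  set dF : (YoungSet b A × YoungSet a B) → ℕ :=
    fun y => ((dSet a b).filter (fun p => y.1.1 p = 0)).card with hdF
  have hne : u.support.Nonempty := Finsupp.support_nonempty_iff.2 hu
  obtain ⟨y0, hy0mem, hy0max⟩ := Finset.exists_max_image u.support dF hne
  obtain ⟨T, S⟩ := y0
  have hTSne : u (T, S) ≠ 0 := Finsupp.mem_support_iff.1 hy0mem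
  by_cases hgood : ∀ p : Fin b, T.1 p = 0 → a ≤ (p : ℕ)
  · exact ⟨T, S, hTSne, hgood⟩
  · push_neg at hgood
    obtain ⟨p, hp0, hpa⟩ := hgood
    exfalso
    set h : Equiv.Perm (Fin a) := Equiv.swap ⟨(p : ℕ), hpa⟩ ⟨a-1, by omega⟩ with hh
    set g : Equiv.Perm (Fin b) := extPerm hab h with hg
    have hrel := hK g h (extPerm_std hab h) T S
    have hT1ne : u (g • T, h • S) ≠ 0 := by
      rw [hrel]
      exact mul_ne_zero (hcne h) hTSne
    set T1 := g • T with hT1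
    set S1 := h • S with hS1
    have hdinv : ∀ r ∈ dSet a b, T1.1 r = T.1 r := by
      intro r hr
      rw [hT1, youngSmul_apply, hg, extPerm_inv, extPerm_apply_ge hab h⁻¹ r (mem_dSet.1 hr)]
    have hdF1 : dF (T1, S1) = dF (T, S) := by
      simp only [hdF]
      congr 1
      apply Finset.filter_congr
      intro r hr
      rw [hdinv r hr]
    have hT1cb : T1.1 cb = 0 := by
      rw [hT1, youngSmul_apply, hg, extPerm_inv,
        extPerm_apply_lt hab h⁻¹ cb (show ((cb : Fin b) : ℕ) < a by have hv : ((cb : Fin b) : ℕ) = a - 1 := rfl; omega)]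
      have h2 : (h⁻¹ ⟨((cb : Fin b) : ℕ), by have hv : ((cb : Fin b) : ℕ) = a - 1 := rfl; omega⟩) = ⟨(p : ℕ), hpa⟩ := by
        rw [hh, Equiv.swap_inv]
        have h3 : (⟨((cb : Fin b) : ℕ), by have hv : ((cb : Fin b) : ℕ) = a - 1 := rfl; omega⟩ : Fin a) = ⟨a-1, by omega⟩ :=
          Fin.ext rfl
        rw [h3, Equiv.swap_apply_right]
      rw [h2]
      have h4 : stdEmb hab (⟨(p : ℕ), hpa⟩ : Fin a) = p := Fin.ext rfl
      rw [h4]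
      exact hp0
    have hmax1 : ∀ y ∈ u.support, dF y ≤ dF (T1, S1) := by
      rw [hdF1]
      exact fun y hy => hy0max y hy
    have hsum := hSig T1 S1
    have hcbnot : cb ∉ dSet a b := by
      rw [mem_dSet]
      have hv : ((cb : Fin b) : ℕ) = a - 1 := rfl
      omega
    have hins : dSet (a-1) b = insert cb (dSet a b) := by
      ext r
      simp only [mem_dSet, Finset.mem_insert]
      constructor
      · intro hr
        by_cases hra : a ≤ (r : ℕ)
        · exact Or.inr hra
        · exact Or.inl (Fin.ext (by have hv : ((cb : Fin b) : ℕ) = a - 1 := rfl; omega))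
      · rintro (rfl | hr)
        · show a - 1 ≤ ((cb : Fin b) : ℕ)
          have hv : ((cb : Fin b) : ℕ) = a - 1 := rfl
          omega
        · omega
    rw [hins, Finset.sum_insert hcbnot] at hsum
    have hterm0 : (Equiv.swap cb cb)⁻¹ • T1 = T1 := by
      rw [Equiv.swap_self]
      show ((1 : Equiv.Perm (Fin b)))⁻¹ • T1 = T1
      rw [inv_one, one_smul]
    rw [hterm0] at hsum
    rw [← Finset.sum_filter_add_sum_filter_not (dSet a b) (fun x => T1.1 x = 0)] at hsum
    have hz : ∀ x ∈ (dSet a b).filter (fun x => T1.1 x = 0),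
        u ((Equiv.swap cb x)⁻¹ • T1, S1) = u (T1, S1) := by
      intro x hx
      have hx0 : T1.1 x = 0 := (Finset.mem_filter.1 hx).2
      have : (Equiv.swap cb x)⁻¹ • T1 = T1 := by
        rw [Equiv.swap_inv]
        exact youngSmul_swap_eq T1 cb x (by rw [hT1cb, hx0])
      rw [this]
    have hnz : ∀ x ∈ (dSet a b).filter (fun x => ¬ T1.1 x = 0),
        u ((Equiv.swap cb x)⁻¹ • T1, S1) = 0 := by
      intro x hx
      obtain ⟨hxD, hxne⟩ := Finset.mem_filter.1 hx
      by_contra hune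
      set T2 := (Equiv.swap cb x)⁻¹ • T1 with hT2
      have hy2 : (T2, S1) ∈ u.support := Finsupp.mem_support_iff.2 hune
      have hT2app : ∀ r : Fin b, T2.1 r = T1.1 (Equiv.swap cb x r) := by
        intro r
        rw [hT2, youngSmul_apply, inv_inv]
      have hxnecb : x ≠ cb := by
        intro hc
        rw [hc] at hxD
        exact hcbnot hxD
      have hfil : (dSet a b).filter (fun r => T2.1 r = 0)
          = insert x ((dSet a b).filter (fun r => T1.1 r = 0)) := by
        ext r
        simp only [Finset.mem_filter, Finset.mem_insert]
        constructor
        · rintro ⟨hrD, hr0⟩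
          by_cases hrx : r = x
          · exact Or.inl hrx
          · right
            refine ⟨hrD, ?_⟩
            rw [hT2app r] at hr0
            have hrcb : r ≠ cb := by
              intro hc
              rw [hc] at hrD
              exact hcbnot hrD
            rwa [Equiv.swap_apply_of_ne_of_ne hrcb hrx] at hr0
        · rintro (rfl | ⟨hrD, hr0⟩)
          · refine ⟨hxD, ?_⟩
            rw [hT2app, Equiv.swap_apply_right, hT1cb]
          · refine ⟨hrD, ?_⟩
            have hrcb : r ≠ cb := by
              intro hc
              rw [hc] at hrD
              exact hcbnot hrD
            have hrx : r ≠ x := by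
              intro hc
              rw [hc] at hr0
              exact hxne hr0
            rw [hT2app, Equiv.swap_apply_of_ne_of_ne hrcb hrx]
            exact hr0
      have hcard2 : dF (T2, S1) = dF (T1, S1) + 1 := by
        simp only [hdF]
        rw [hfil, Finset.card_insert_of_notMem (by
          simp only [Finset.mem_filter, not_and]
          intro _
          exact hxne)]
      have := hmax1 _ hy2
      omega
    rw [Finset.sum_congr rfl hz, Finset.sum_congr rfl hnz, Finset.sum_const,
      Finset.sum_const_zero, add_zero, nsmul_eq_mul] at hsum
    have hfinal : (1 + (((dSet a b).filter (fun x => T1.1 x = 0)).card : k)) * u (T1, S1) = 0 := by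
      rw [add_mul, one_mul]
      exact hsum
    have hcast : (1 + (((dSet a b).filter (fun x => T1.1 x = 0)).card : k)) ≠ 0 := by
      have : ((1 + ((dSet a b).filter (fun x => T1.1 x = 0)).card : ℕ) : k) ≠ 0 :=
        Nat.cast_ne_zero.2 (by omega)
      rwa [Nat.cast_add, Nat.cast_one] at this
    exact hT1ne (by
      rcases mul_eq_zero.1 hfinal with hc | hc
      · exact absurd hc hcast
      · exact hc)

end Comb



/-! ### Counting lemmas -/

lemma sgnk_ne_zero {n : ℕ} (g : Equiv.Perm (Fin n)) :
    ((Equiv.Perm.sign g : ℤ) : k) ≠ 0 := by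
  rcases Int.units_eq_one_or (Equiv.Perm.sign g) with h | h <;> rw [h] <;> simp

section Count

variable {a b : ℕ} {A : ℕ → ℕ} (hab : a ≤ b)

lemma low_fiber_eq (T : YoungSet b A) (j : ℕ) :
    (Finset.univ.filter (fun q : Fin a => T.1 (stdEmb hab q) = j)).card
      = ((Finset.univ.filter (fun p : Fin b => T.1 p = j)).filter
          (fun p : Fin b => (p : ℕ) < a)).card := by
  classical
  apply Finset.card_bij (fun q _ => stdEmb hab q)
  · intro q hq
    simp only [Finset.mem_filter, Finset.mem_univ, true_and] at hq ⊢
    exact ⟨hq, by simpa using q.isLt⟩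
  · intro q _ q' _ hqq'
    exact (stdEmb hab).injective hqq'
  · intro p hp
    simp only [Finset.mem_filter, Finset.mem_univ, true_and] at hp
    refine ⟨⟨(p : ℕ), hp.2⟩, ?_, Fin.ext rfl⟩
    simp only [Finset.mem_filter, Finset.mem_univ, true_and]
    have : stdEmb hab (⟨(p : ℕ), hp.2⟩ : Fin a) = p := Fin.ext rfl
    rw [this]
    exact hp.1

lemma low_add_d_fiber (T : YoungSet b A) (j : ℕ) :
    (Finset.univ.filter (fun q : Fin a => T.1 (stdEmb hab q) = j)).card
      + ((dSet a b).filter (fun p => T.1 p = j)).card = A j := by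
  classical
  rw [low_fiber_eq hab T j, ← youngSet_fiber_card T j]
  have hD : ((dSet a b).filter (fun p => T.1 p = j))
      = (Finset.univ.filter (fun p : Fin b => T.1 p = j)).filter
        (fun p : Fin b => ¬ (p : ℕ) < a) := by
    ext p
    simp only [Finset.mem_filter, mem_dSet, Finset.mem_univ, true_and]
    constructor
    · rintro ⟨h1, h2⟩
      exact ⟨h2, by omega⟩
    · rintro ⟨h1, h2⟩
      exact ⟨by omega, h1⟩
  rw [hD]
  exact Finset.card_filter_add_card_filter_not _

lemma card_filter_mem_eq_sum (T' : Fin a → ℕ) (s : Finset ℕ) :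
    (Finset.univ.filter (fun q : Fin a => T' q ∈ s)).card
      = ∑ i ∈ s, (Finset.univ.filter (fun q : Fin a => T' q = i)).card := by
  classical
  rw [Finset.card_eq_sum_card_fiberwise (f := T') (s := Finset.univ.filter (fun q : Fin a => T' q ∈ s)) (t := s)
    (fun q hq => (Finset.mem_filter.1 hq).2)]
  refine Finset.sum_congr rfl fun i hi => ?_
  congr 1
  ext q
  simp only [Finset.mem_filter, Finset.mem_univ, true_and]
  constructor
  · rintro ⟨h1, h2⟩
    exact h2
  · intro h1
    exact ⟨by rw [h1]; exact hi, h1⟩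

lemma sum_Icc_one (f : ℕ → ℕ) (r : ℕ) :
    ∑ i ∈ Finset.Icc 1 (r+1), f i = ∑ t ∈ Finset.range (r+1), f (t+1) := by
  have h : Finset.Icc 1 (r+1)
      = (Finset.range (r+1)).map ⟨fun t => t+1, add_left_injective 1⟩ := by
    ext i
    simp only [Finset.mem_Icc, Finset.mem_map, Finset.mem_range, Function.Embedding.coeFn_mk]
    constructor
    · rintro ⟨h1, h2⟩
      exact ⟨i-1, by omega, by omega⟩
    · rintro ⟨t, ht, rfl⟩
      omega
  rw [h, Finset.sum_map]
  rfl

lemma fiber_bound (X Ykey : Fin a → ℕ) (j r : ℕ) (cj : ℕ)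
    (P : ℕ → Prop) [DecidablePred P]
    (vals : Finset ℕ) (hvals : vals.card ≤ r+1)
    (hmaps : ∀ v, P v → v ∈ vals)
    (hdist : ∀ q q' : Fin a, q ≠ q' → Ykey q = Ykey q' → X q ≠ X q')
    (hfib : (Finset.univ.filter (fun q : Fin a => Ykey q = j)).card = cj) :
    (Finset.univ.filter (fun q : Fin a => P (X q) ∧ Ykey q = j)).card
      ≤ min (r+1) cj := by
  classical
  apply le_min
  · calc (Finset.univ.filter (fun q : Fin a => P (X q) ∧ Ykey q = j)).card
        ≤ vals.card := by
          apply Finset.card_le_card_of_injOn X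
          · intro q hq
            exact hmaps _ (Finset.mem_filter.1 hq).2.1
          · intro q hq q' hq' hX
            by_contra hne
            simp only [Finset.coe_filter, Set.mem_setOf_eq, Finset.mem_univ, true_and] at hq hq'
            exact hdist q q' hne (hq.2.trans hq'.2.symm) hX
      _ ≤ r + 1 := hvals
  · rw [← hfib]
    apply Finset.card_le_card
    intro q hq
    simp only [Finset.mem_filter, Finset.mem_univ, true_and] at hq ⊢
    exact hq.2

lemma count_bound (X Ykey : Fin a → ℕ) (μ : ℕ → ℕ) (hμ : IsPartition μ) (r N : ℕ)
    (hN : μ 0 ≤ N) (P : ℕ → Prop) [DecidablePred P]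
    (hkey_lt : ∀ q, Ykey q < N)
    (hbound : ∀ j ∈ Finset.range N,
      (Finset.univ.filter (fun q : Fin a => P (X q) ∧ Ykey q = j)).card
        ≤ min (r+1) (transposeP μ j)) :
    (Finset.univ.filter (fun q : Fin a => P (X q))).card
      ≤ ∑ t ∈ Finset.range (r+1), μ t := by
  classical
  rw [← sum_min_transposeP hμ r N hN]
  rw [Finset.card_eq_sum_card_fiberwise (f := Ykey) (t := Finset.range N)
    (fun q _ => Finset.mem_range.2 (hkey_lt q))]
  apply Finset.sum_le_sum
  intro j hj
  refine le_trans (le_of_eq ?_) (hbound j hj)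
  congr 1
  ext q
  simp only [Finset.mem_filter, Finset.mem_univ, true_and]
  try tauto

end Count

end AuxStmt14







/-- For `1 ≤ a ≤ b` and `λ ⊢ b`, `ν ⊢ a` in characteristic zero: a simple module
`S^λ ⊠ S^ν` occurring in `k[Hom_FI(a,b)]` fails to occur as a composition factor of
`Ind_{S_b × S_{a-1}}^{S_b × S_a} k[Hom_FI(a-1,b)]` if and only if `ν = λ̄` and
`λ_1 = b - a`.  (By Frobenius reciprocity in the semisimple situation, occurrence in the
induced module is expressed as the existence of a nonzero `S_b × S_{a-1}`-equivariant
map `k[Hom_FI(a-1,b)] → S^λ ⊠ S^ν`, where `S_{a-1}` acts on `S^ν` via `S_{a-1} ⊆ S_a`.) -/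
theorem stmt14 (k : Type) [Field k] [CharZero k] (a b : ℕ) (ha : 1 ≤ a) (hab : a ≤ b)
    (l m : ℕ → ℕ) (hl : IsPartitionOfSize l b) (hm : IsPartitionOfSize m a)
    (V W : Type) [AddCommGroup V] [Module k V] [AddCommGroup W] [Module k W]
    (ρ : Representation k (Equiv.Perm (Fin b)) V)
    (σ : Representation k (Equiv.Perm (Fin a)) W)
    (hρ : IsSpechtRep k ρ l) (hσ : IsSpechtRep k σ m)
    (hoccur : ∃ φ : ((Fin a ↪ Fin b) →₀ k) →ₗ[k] TensorProduct k V W, φ ≠ 0 ∧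
      ∀ (g : Equiv.Perm (Fin b) × Equiv.Perm (Fin a)) (x : (Fin a ↪ Fin b) →₀ k),
        φ (MonoidAlgebra.coeffLinearEquiv k (Representation.ofMulAction k (Equiv.Perm (Fin b) × Equiv.Perm (Fin a))
            (Fin a ↪ Fin b) g ((MonoidAlgebra.coeffLinearEquiv k).symm x))) = (boxtimes ρ σ) g (φ x)) :
    (¬ ∃ ψ : ((Fin (a - 1) ↪ Fin b) →₀ k) →ₗ[k] TensorProduct k V W, ψ ≠ 0 ∧
      ∀ (g : Equiv.Perm (Fin b)) (h : Equiv.Perm (Fin (a - 1)))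
        (x : (Fin (a - 1) ↪ Fin b) →₀ k),
        ψ (MonoidAlgebra.coeffLinearEquiv k (Representation.ofMulAction k (Equiv.Perm (Fin b) × Equiv.Perm (Fin (a - 1)))
            (Fin (a - 1) ↪ Fin b) (g, h) ((MonoidAlgebra.coeffLinearEquiv k).symm x))) =
          (boxtimes ρ σ) (g, extPerm (Nat.sub_le a 1) h) (ψ x)) ↔
    (m = rowBar l ∧ l 0 = b - a) := by
  classical
  obtain ⟨hsimV, ⟨φV, hφVne, hφVeq⟩, ⟨ψV, hψVne, hψVeq⟩⟩ := hρ
  obtain ⟨hsimW, ⟨φW, hφWne, hφWeq⟩, ⟨ψW, hψWne, hψWeq⟩⟩ := hσ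
  obtain ⟨φ, hφne, hφeq⟩ := hoccur
  have hφVinj : Function.Injective φV :=
    injective_of_simple ρ hsimV φV hφVne (fun g v hv => by rw [hφVeq, hv, map_zero, map_zero, map_zero])
  have hψVinj : Function.Injective ψV :=
    injective_of_simple ρ hsimV ψV hψVne (fun g v hv => by rw [hψVeq, hv, map_zero, map_zero, map_zero, smul_zero])
  have hφWinj : Function.Injective φW :=
    injective_of_simple σ hsimW φW hφWne (fun g v hv => by rw [hφWeq, hv, map_zero, map_zero, map_zero])
  have hψWinj : Function.Injective ψW :=
    injective_of_simple σ hsimW ψW hψWne (fun g v hv => by rw [hψWeq, hv, map_zero, map_zero, map_zero, smul_zero])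
  set sgb : Equiv.Perm (Fin b) → k := fun g => ((Equiv.Perm.sign g : ℤ) : k) with hsgb
  set sga : Equiv.Perm (Fin a) → k := fun h => ((Equiv.Perm.sign h : ℤ) : k) with hsga
  have hpic2 : ∀ (g : Equiv.Perm (Fin b)) (h : Equiv.Perm (Fin a)) (t : TensorProduct k V W)
      (T : YoungSet b l) (S : YoungSet a (transposeP m)),
      pic φV ψW ((boxtimes ρ σ) (g, h) t) (g • T, h • S) = sga h * pic φV ψW t (T, S) := by
    intro g h t T S
    have := pic_coeff ρ σ φV ψW (fun _ => (1 : k)) sga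
      (fun g v => by rw [one_smul]; exact hφVeq g v) (fun h w => hψWeq h w) g h t T S
    rwa [one_mul] at this
  have hpic3 : ∀ (g : Equiv.Perm (Fin b)) (h : Equiv.Perm (Fin a)) (t : TensorProduct k V W)
      (T : YoungSet b (transposeP l)) (S : YoungSet a m),
      pic ψV φW ((boxtimes ρ σ) (g, h) t) (g • T, h • S) = sgb g * pic ψV φW t (T, S) := by
    intro g h t T S
    have := pic_coeff ρ σ ψV φW sgb (fun _ => (1 : k))
      (fun g v => hψVeq g v) (fun h w => by rw [one_smul]; exact hφWeq h w) g h t T S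
    rwa [mul_one] at this
  constructor
  · -- forward direction
    intro hnot
    set F0 : Fin a ↪ Fin b := stdEmb hab with hF0
    set w : TensorProduct k V W := φ (Finsupp.single F0 1) with hwdef
    -- w ≠ 0
    have hw : w ≠ 0 := by
      intro h0
      apply hφne
      apply Finsupp.lhom_ext
      intro F r
      show φ (Finsupp.single F r) = (0 : ((Fin a ↪ Fin b) →₀ k) →ₗ[k]
        TensorProduct k V W) (Finsupp.single F r)
      obtain ⟨g, hg⟩ := exists_perm_comp F0 F
      have hsm : injSmul (g, (1 : Equiv.Perm (Fin a))) F0 = F := by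
        apply Function.Embedding.ext
        intro i
        rw [injSmul_apply]
        have h1 : ((1 : Equiv.Perm (Fin a)))⁻¹ i = i := by simp
        rw [h1]
        exact hg i
      have h2 : φ (Finsupp.single F 1) = 0 := by
        rw [← hsm, ← injSmul_def, ← ofMA_single
          (k := k) (g := ((g, (1 : Equiv.Perm (Fin a))) : Equiv.Perm (Fin b) × Equiv.Perm (Fin a)))
          (x := F0) (r := (1 : k)), hφeq, ← hwdef, h0, map_zero]
      rw [← Finsupp.smul_single_one, map_smul, h2, smul_zero, LinearMap.zero_apply]
    -- K-invariance of w
    have hKw : ∀ (g : Equiv.Perm (Fin b)) (h : Equiv.Perm (Fin a)),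
        (∀ i : Fin a, g (stdEmb hab i) = stdEmb hab (h i)) →
        (boxtimes ρ σ) (g, h) w = w := by
      intro g h hgh
      have hsm : injSmul (g, h) F0 = F0 := by
        apply Function.Embedding.ext
        intro i
        rw [injSmul_apply]
        show g (stdEmb hab (h⁻¹ i)) = stdEmb hab i
        rw [hgh (h⁻¹ i), ← Equiv.Perm.mul_apply, mul_inv_cancel, Equiv.Perm.one_apply]
      rw [hwdef, ← hφeq (g, h) (Finsupp.single F0 1),
        ofMA_single, injSmul_def, hsm]
    -- ψ₀ = 0
    have hψ0 : φ.comp (lmapL k ha hab) = 0 := by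
      by_contra hne0
      exact hnot ⟨φ.comp (lmapL k ha hab), hne0, fun g h x => psi0_prop ρ σ φ hφeq ha hab g h x⟩
    set cb : Fin b := ⟨a-1, by omega⟩ with hcb
    -- v = 0
    have hv : ∑ x ∈ dSet (a-1) b,
        (boxtimes ρ σ) (Equiv.swap cb x, (1 : Equiv.Perm (Fin a))) w = 0 := by
      have h1 : (φ.comp (lmapL k ha hab))
          (Finsupp.single (stdEmb (le_trans (Nat.sub_le a 1) hab)) (1 : k)) = 0 := by
        rw [hψ0, LinearMap.zero_apply]
      rw [LinearMap.comp_apply, lmapL_single, one_smul, extSum_std ha hab, map_sum] at h1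
      rw [← h1]
      apply Finset.sum_congr rfl
      intro x _
      rw [hwdef, ← hφeq (Equiv.swap cb x, (1 : Equiv.Perm (Fin a))) (Finsupp.single F0 1),
        ofMA_single, injSmul_def]
    -- pictures
    set u2 := pic φV ψW w with hu2
    set u3 := pic ψV φW w with hu3
    have hu2ne : u2 ≠ 0 := fun h0 =>
      hw (pic_injective φV ψW hφVinj hψWinj (h0.trans (map_zero _).symm))
    have hu3ne : u3 ≠ 0 := fun h0 =>
      hw (pic_injective ψV φW hψVinj hφWinj (h0.trans (map_zero _).symm))
    have hK2 : ∀ (g : Equiv.Perm (Fin b)) (h : Equiv.Perm (Fin a)),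
        (∀ i : Fin a, g (stdEmb hab i) = stdEmb hab (h i)) →
        ∀ T S, u2 (g • T, h • S) = sga h * u2 (T, S) := by
      intro g h hgh T S
      have h1 := hpic2 g h w T S
      rwa [hKw g h hgh] at h1
    have hK3 : ∀ (g : Equiv.Perm (Fin b)) (h : Equiv.Perm (Fin a)),
        (∀ i : Fin a, g (stdEmb hab i) = stdEmb hab (h i)) →
        ∀ T S, u3 (g • T, h • S) = sgb g * u3 (T, S) := by
      intro g h hgh T S
      have h1 := hpic3 g h w T S
      rwa [hKw g h hgh] at h1
    have hSig2 : ∀ (T : YoungSet b l) (S : YoungSet a (transposeP m)),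
        ∑ x ∈ dSet (a-1) b, u2 ((Equiv.swap cb x)⁻¹ • T, S) = 0 := by
      intro T S
      have h1 : ∑ x ∈ dSet (a-1) b,
          (pic φV ψW ((boxtimes ρ σ) (Equiv.swap cb x, (1 : Equiv.Perm (Fin a))) w)) (T, S)
            = 0 := by
        rw [← Finsupp.finset_sum_apply, ← map_sum, hv, map_zero, Finsupp.coe_zero,
          Pi.zero_apply]
      rw [← h1]
      apply Finset.sum_congr rfl
      intro x _
      have h2 := hpic2 (Equiv.swap cb x) 1 w ((Equiv.swap cb x)⁻¹ • T) S
      rw [smul_inv_smul, one_smul] at h2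
      rw [h2, hsga]
      simp
      rfl
    -- 6a: b - a ≤ l 0
    obtain ⟨⟨T3, S3⟩, hmem3⟩ := Finsupp.support_nonempty_iff.2 hu3ne
    have hTS3 : u3 (T3, S3) ≠ 0 := Finsupp.mem_support_iff.1 hmem3
    have hdist3D : ∀ p q : Fin b, a ≤ (p : ℕ) → a ≤ (q : ℕ) → p ≠ q →
        T3.1 p ≠ T3.1 q := by
      intro p q hp hq hpq
      exact support_TD_distinct hab u3 (fun g _ => sgb g) hK3
        (fun p q hp hq hpq => by rw [hsgb]; exact sgnk_swap p q hpq)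
        T3 S3 hTS3 hp hq hpq
    have h6a : b - a ≤ l 0 := by
      rw [← dSet_card (a := a) hab, ← Finset.card_range (l 0)]
      apply Finset.card_le_card_of_injOn (fun p => T3.1 p)
      · exact fun p _ => Finset.mem_range.2 (youngSet_val_lt hl.1 T3 p)
      · intro p hp q hq hTT
        by_contra hne
        exact hdist3D p q (mem_dSet.1 (Finset.mem_coe.1 hp))
          (mem_dSet.1 (Finset.mem_coe.1 hq)) hne hTT
    -- 6b: extremal element and l 0 ≤ b - a
    obtain ⟨T2, S2, hTS2, hzero⟩ := exists_support_good hab u2 (fun _ h => sga h) ha hK2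
      (fun h => by rw [hsga]; exact sgnk_ne_zero h) hSig2 hu2ne
    have hzf : Finset.univ.filter (fun p : Fin b => T2.1 p = 0) ⊆ dSet a b :=
      fun p hp => mem_dSet.2 (hzero p (Finset.mem_filter.1 hp).2)
    have h6b : l 0 ≤ b - a := by
      rw [← dSet_card (a := a) hab, ← youngSet_fiber_card T2 0]
      exact Finset.card_le_card hzf
    have hl0 : l 0 = b - a := le_antisymm h6b h6a
    have hzf_eq : Finset.univ.filter (fun p : Fin b => T2.1 p = 0) = dSet a b := by
      apply Finset.eq_of_subset_of_card_le hzf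
      rw [dSet_card hab, youngSet_fiber_card T2 0]
      omega
    have hDzero : ∀ p ∈ dSet a b, T2.1 p = 0 := by
      intro p hp
      rw [← hzf_eq] at hp
      exact (Finset.mem_filter.1 hp).2
    have hdist2 : ∀ q q' : Fin a, q ≠ q' → S2.1 q = S2.1 q' →
        T2.1 (stdEmb hab q) ≠ T2.1 (stdEmb hab q') := by
      intro q q' hne hS
      exact support_diag_distinct hab u2 (fun _ h => sga h) hK2
        (fun q q' hne => by rw [hsga]; exact sgnk_swap q q' hne)
        T2 S2 hTS2 hne hS
    -- 6c
    have h6c : ∀ r, ∑ t ∈ Finset.range (r+1), rowBar l t ≤ ∑ t ∈ Finset.range (r+1), m t := by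
      intro r
      have hDempty : ∀ i, i ≠ 0 → ((dSet a b).filter (fun p => T2.1 p = i)).card = 0 := by
        intro i hi
        rw [Finset.card_eq_zero, Finset.filter_eq_empty_iff]
        intro p hp
        rw [hDzero p hp]
        exact fun hc => hi hc.symm
      have hlow : ∀ i, i ≠ 0 →
          (Finset.univ.filter (fun q : Fin a => T2.1 (stdEmb hab q) = i)).card = l i := by
        intro i hi
        have h1 := low_add_d_fiber hab T2 i
        rw [hDempty i hi] at h1
        omega
      calc ∑ t ∈ Finset.range (r+1), rowBar l t
          = ∑ i ∈ Finset.Icc 1 (r+1), l i := (sum_Icc_one l r).symm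
        _ = ∑ i ∈ Finset.Icc 1 (r+1),
              (Finset.univ.filter (fun q : Fin a => T2.1 (stdEmb hab q) = i)).card := by
            refine Finset.sum_congr rfl fun i hi => ?_
            rw [hlow i (by have := Finset.mem_Icc.1 hi; omega)]
        _ = (Finset.univ.filter
              (fun q : Fin a => T2.1 (stdEmb hab q) ∈ Finset.Icc 1 (r+1))).card :=
            (card_filter_mem_eq_sum _ _).symm
        _ ≤ ∑ t ∈ Finset.range (r+1), m t := by
            apply count_bound (X := fun q => T2.1 (stdEmb hab q)) (Ykey := fun q => S2.1 q)
              m hm.1 r (m 0) le_rfl (P := fun v => v ∈ Finset.Icc 1 (r+1))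
            · intro q
              exact youngSet_val_lt hm.1 S2 q
            · intro j _
              exact fiber_bound (fun q => T2.1 (stdEmb hab q)) (fun q => S2.1 q) j r
                (transposeP m j) (fun v => v ∈ Finset.Icc 1 (r+1)) (Finset.Icc 1 (r+1))
                (by rw [Nat.card_Icc]; omega) (fun v hv => hv)
                (fun q q' hne hY => hdist2 q q' hne hY) (youngSet_fiber_card S2 j)
    -- 6d
    have hDone3 : ∀ j ∈ Finset.range (l 0),
        ((dSet a b).filter (fun p => T3.1 p = j)).card = 1 := by
      intro j hj
      have hsurj := Finset.surj_on_of_inj_on_of_card_le (s := dSet a b)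
        (t := Finset.range (l 0)) (fun p _ => T3.1 p)
        (fun p _ => Finset.mem_range.2 (youngSet_val_lt hl.1 T3 p))
        (fun p q hp hq hT => by
          by_contra hne
          exact hdist3D p q (mem_dSet.1 hp) (mem_dSet.1 hq) hne hT)
        (by rw [Finset.card_range, dSet_card hab, hl0])
      obtain ⟨p, hpD, hpj⟩ := hsurj j hj
      have hpj' : j = T3.1 p := hpj
      rw [Finset.card_eq_one]
      refine ⟨p, ?_⟩
      ext q
      simp only [Finset.mem_filter, Finset.mem_singleton]
      constructor
      · rintro ⟨hqD, hqj⟩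
        by_contra hne
        exact hdist3D q p (mem_dSet.1 hqD) (mem_dSet.1 hpD) hne (by rw [hqj, hpj'])
      · rintro rfl
        exact ⟨hpD, hpj'.symm⟩
    have hlow3 : ∀ j ∈ Finset.range (l 0),
        (Finset.univ.filter (fun q : Fin a => T3.1 (stdEmb hab q) = j)).card
          = transposeP (rowBar l) j := by
      intro j hj
      have h1 := low_add_d_fiber hab T3 j
      rw [hDone3 j hj] at h1
      have h2 := transposeP_rowBar hl.1 (Finset.mem_range.1 hj)
      omega
    have hdist3diag : ∀ q q' : Fin a, q ≠ q' →
        T3.1 (stdEmb hab q) = T3.1 (stdEmb hab q') → S3.1 q ≠ S3.1 q' := by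
      intro q q' hne hT hS
      exact support_diag_distinct hab u3 (fun g _ => sgb g) hK3
        (fun q q' hne => by rw [hsgb]; simp only; rw [sign_extPerm]; exact sgnk_swap q q' hne)
        T3 S3 hTS3 hne hS hT
    have h6d : ∀ r, ∑ t ∈ Finset.range (r+1), m t ≤ ∑ t ∈ Finset.range (r+1), rowBar l t := by
      intro r
      calc ∑ t ∈ Finset.range (r+1), m t
          = ∑ i ∈ Finset.range (r+1),
              (Finset.univ.filter (fun q : Fin a => S3.1 q = i)).card := by
            refine Finset.sum_congr rfl fun i _ => ?_
            rw [youngSet_fiber_card S3 i]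
        _ = (Finset.univ.filter (fun q : Fin a => S3.1 q ∈ Finset.range (r+1))).card :=
            (card_filter_mem_eq_sum _ _).symm
        _ ≤ ∑ t ∈ Finset.range (r+1), rowBar l t := by
            apply count_bound (X := fun q => S3.1 q)
              (Ykey := fun q => T3.1 (stdEmb hab q)) (rowBar l) (isPartition_rowBar hl.1)
              r (l 0) (hl.1.1 (Nat.zero_le 1)) (P := fun v => v ∈ Finset.range (r+1))
            · intro q
              exact youngSet_val_lt hl.1 T3 (stdEmb hab q)
            · intro j hj
              exact fiber_bound (fun q => S3.1 q) (fun q => T3.1 (stdEmb hab q)) j r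
                (transposeP (rowBar l) j) (fun v => v ∈ Finset.range (r+1))
                (Finset.range (r+1)) (le_of_eq (Finset.card_range _)) (fun v hv => hv)
                (fun q q' hne hY => hdist3diag q q' hne hY) (hlow3 j hj)
    -- conclude
    refine ⟨?_, hl0⟩
    have hsums : ∀ r, ∑ t ∈ Finset.range r, m t = ∑ t ∈ Finset.range r, rowBar l t := by
      intro r
      cases r with
      | zero => simp
      | succ r => exact le_antisymm (h6d r) (h6c r)
    funext t
    have h1 := hsums (t+1)
    have h2 := hsums t
    rw [Finset.sum_range_succ, Finset.sum_range_succ] at h1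
    omega
  · -- backward direction
    rintro ⟨hmeq, hl0⟩ ⟨ψ, hψne, hψeq⟩
    have hex : ∃ f : Fin (a-1) ↪ Fin b, ψ (Finsupp.single f 1) ≠ 0 := by
      by_contra hall
      push_neg at hall
      apply hψne
      apply Finsupp.lhom_ext
      intro f r
      show ψ (Finsupp.single f r) = (0 : ((Fin (a-1) ↪ Fin b) →₀ k) →ₗ[k]
        TensorProduct k V W) (Finsupp.single f r)
      rw [← Finsupp.smul_single_one, map_smul, hall f, smul_zero, LinearMap.zero_apply]
    obtain ⟨f, hfne⟩ := hex
    set w' := ψ (Finsupp.single f 1) with hw'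
    set u3 := pic ψV φW w' with hu3
    have hu3ne : u3 ≠ 0 := fun h0 =>
      hfne (pic_injective ψV φW hψVinj hφWinj (h0.trans (map_zero _).symm))
    obtain ⟨⟨T, S⟩, hmem⟩ := Finsupp.support_nonempty_iff.2 hu3ne
    have hTS : u3 (T, S) ≠ 0 := Finsupp.mem_support_iff.1 hmem
    set Eset := Finset.univ.filter (fun p : Fin b => ¬ p ∈ Set.range ⇑f) with hEset
    have hEcard : b - (a-1) ≤ Eset.card := by
      have himg : Finset.univ.filter (fun p : Fin b => p ∈ Set.range ⇑f)
          = Finset.univ.image ⇑f := by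
        ext p
        simp only [Finset.mem_filter, Finset.mem_univ, true_and, Finset.mem_image,
          Set.mem_range]
      have hc1 : (Finset.univ.filter (fun p : Fin b => p ∈ Set.range ⇑f)).card = a - 1 := by
        rw [himg, Finset.card_image_of_injective _ f.injective, Finset.card_univ,
          Fintype.card_fin]
      have hsplit := Finset.card_filter_add_card_filter_not
        (s := (Finset.univ : Finset (Fin b))) (p := fun p : Fin b => p ∈ Set.range ⇑f)
      rw [Finset.card_univ, Fintype.card_fin, hc1] at hsplit
      rw [hEset]
      omega
    have hlt : (Finset.range (l 0)).card < Eset.card := by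
      rw [Finset.card_range, hl0]
      omega
    obtain ⟨p, hp, q, hq, hpq, heq⟩ := Finset.exists_ne_map_eq_of_card_lt_of_maps_to hlt
      (fun p _ => Finset.mem_range.2 (youngSet_val_lt hl.1 T p))
    have hpnr : p ∉ Set.range ⇑f := by
      rw [hEset] at hp
      exact (Finset.mem_filter.1 hp).2
    have hqnr : q ∉ Set.range ⇑f := by
      rw [hEset] at hq
      exact (Finset.mem_filter.1 hq).2
    have hrel : (boxtimes ρ σ) (Equiv.swap p q, (1 : Equiv.Perm (Fin a))) w' = w' := by
      have hsm : injSmul (Equiv.swap p q, (1 : Equiv.Perm (Fin (a-1)))) f = f := by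
        apply Function.Embedding.ext
        intro i
        rw [injSmul_apply]
        have h1 : ((1 : Equiv.Perm (Fin (a-1))))⁻¹ i = i := by simp
        rw [h1]
        have hne1 : f i ≠ p := fun hc => hpnr ⟨i, hc⟩
        have hne2 : f i ≠ q := fun hc => hqnr ⟨i, hc⟩
        rw [Equiv.swap_apply_of_ne_of_ne hne1 hne2]
      have h2 : (boxtimes ρ σ) (Equiv.swap p q,
          extPerm (Nat.sub_le a 1) (1 : Equiv.Perm (Fin (a-1)))) w' = w' := by
        rw [hw', ← hψeq (Equiv.swap p q) 1 (Finsupp.single f 1),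
          ofMA_single, injSmul_def, hsm]
      rwa [map_one] at h2
    have h4 := hpic3 (Equiv.swap p q) 1 w' T S
    rw [hrel, youngSmul_swap_eq T p q heq, one_smul] at h4
    rw [hsgb] at h4
    simp only at h4
    rw [sgnk_swap p q hpq] at h4
    exact hTS (neg_self_zero h4)
end

section
/- Let k be a field of characteristic zero and b ≥ 1. There is a short exact sequence of FI-modules 0 → k⟨1⟩ ⊙ k[Hom_FI(−, b−1)] → Res k[Hom_FI(−, b)] → k[Hom_FI(−, b−1)] → 0, where on a finite set U the right-hand map π sends a basis element [f], f : U ↪ {1,…,b}, to [f] if the image of f lies in {1,…,b−1} and to 0 otherwise, and the kernel evaluated at U is ⊕_{W ⊆ U, |W| = |U|−1} k[Hom_FI(W, b−1)], via the isomorphism sending f : W ↪ {1,…,b−1} to its extension g : U ↪ {1,…,b} with g(U∖W) = {b}. In particular π is a morphism of FI-modules (i.e., commutes with the transpose covariant action of injections). -/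
open scoped Classical
open DirectSum

noncomputable section

/-- The value at a finite set `U` of the `FI`-module `k[Hom_FI(-,b)]^tr`:
the free `k`-module on the injections `U ↪ Fin b`. -/
abbrev FIM (k : Type) [Field k] (b : ℕ) (U : Type) : Type := (U ↪ Fin b) →₀ k

/-- The transpose covariant `FI`-structure map: for an injection `i : U ↪ V'`,
`[f] ↦ Σ_{f' ∘ i = f} [f']`. -/
def FImap (k : Type) [Field k] (b : ℕ) {U V' : Type} [Fintype U] [Fintype V']
    (i : U ↪ V') : FIM k b U →ₗ[k] FIM k b V' :=
  Finsupp.lift (FIM k b V') k (U ↪ Fin b)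
    (fun f => ∑ f' ∈ Finset.univ.filter (fun f' : V' ↪ Fin b => ∀ u, f' (i u) = f u),
      Finsupp.single f' 1)

/-- The surjection `π : k[Hom_FI(U,b)] → k[Hom_FI(U,b-1)]` sending `[f]` to `[f]` if the
image of `f` lies in `Fin (b-1)` and to `0` otherwise. -/
def piMap (k : Type) [Field k] (b : ℕ) (hb : 1 ≤ b) (U : Type) [Fintype U] :
    FIM k b U →ₗ[k] FIM k (b - 1) U :=
  Finsupp.lift (FIM k (b - 1) U) k (U ↪ Fin b)
    (fun f => if h : ∀ u, (f u : ℕ) < b - 1 then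
      Finsupp.single
        ⟨fun u => ⟨(f u : ℕ), h u⟩, by
          intro u v huv
          apply f.injective
          apply Fin.ext
          have h1 : ((⟨(f u : ℕ), h u⟩ : Fin (b - 1)) : ℕ) =
              ((⟨(f v : ℕ), h v⟩ : Fin (b - 1)) : ℕ) := congrArg Fin.val huv
          simpa using h1⟩ 1
      else 0)

/-- Extension of an injection `{x : U // x ≠ u} ↪ Fin (b-1)` to an injection
`U ↪ Fin b` sending `u` to the top element `b - 1`. -/
def extendEmb (b : ℕ) (hb : 1 ≤ b) {U : Type} (u : U)
    (f : {x : U // x ≠ u} ↪ Fin (b - 1)) : U ↪ Fin b where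
  toFun x := if h : x = u then ⟨b - 1, by omega⟩
    else Fin.castLE (Nat.sub_le b 1) (f ⟨x, h⟩)
  inj' := by
    intro x y hxy
    dsimp only at hxy
    by_cases hx : x = u <;> by_cases hy : y = u
    · exact hx.trans hy.symm
    · rw [dif_pos hx, dif_neg hy] at hxy
      have h1 := congrArg Fin.val hxy
      have h2 := (f ⟨y, hy⟩).isLt
      simp only [Fin.coe_castLE] at h1
      omega
    · rw [dif_neg hx, dif_pos hy] at hxy
      have h1 := congrArg Fin.val hxy
      have h2 := (f ⟨x, hx⟩).isLt
      simp only [Fin.coe_castLE] at h1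
      omega
    · rw [dif_neg hx, dif_neg hy] at hxy
      have h1 := congrArg Fin.val hxy
      simp only [Fin.coe_castLE] at h1
      have h3 := f.injective (Fin.ext h1)
      exact congrArg Subtype.val h3

/-- The value at `U` of the `FI`-module `k⟨1⟩ ⊙ k[Hom_FI(-,b-1)]`:
`⊕_{W ⊆ U, |W| = |U|-1} k[Hom_FI(W, b-1)]`, with `W` indexed by its complementary
point. -/
abbrev KM (k : Type) [Field k] (b : ℕ) (U : Type) : Type :=
  ⨁ (u : U), FIM k (b - 1) {x : U // x ≠ u}

/-- The inclusion `(k⟨1⟩ ⊙ k[Hom_FI(-,b-1)])(U) → k[Hom_FI(U,b)]`, sending the basis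
element `f : W ↪ Fin (b-1)` in the summand with `W = U \ {u}` to its extension
`g : U ↪ Fin b` with `g u = b - 1` (0-indexed top element of `Fin b`). -/
def alphaMap (k : Type) [Field k] (b : ℕ) (hb : 1 ≤ b) (U : Type) [Fintype U] :
    KM k b U →ₗ[k] FIM k b U :=
  DirectSum.toModule k U (FIM k b U) (fun u =>
    Finsupp.lift (FIM k b U) k ({x : U // x ≠ u} ↪ Fin (b - 1))
      (fun f => Finsupp.single (extendEmb b hb u f) 1))

/-- Restriction of an injection `i : U ↪ V'` to the complement of a point. -/
def restrictEmb {U V' : Type} (i : U ↪ V') (u : U) :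
    {x : U // x ≠ u} ↪ {y : V' // y ≠ i u} where
  toFun x := ⟨i x.1, fun h => x.2 (i.injective h)⟩
  inj' := by
    intro x y h
    apply Subtype.ext
    exact i.injective (congrArg Subtype.val h)

/-- The `FI`-structure map of `k⟨1⟩ ⊙ k[Hom_FI(-,b-1)]` for an injection `i : U ↪ V'`. -/
def KMmap (k : Type) [Field k] (b : ℕ) {U V' : Type} [Fintype U] [Fintype V']
    (i : U ↪ V') : KM k b U →ₗ[k] KM k b V' :=
  DirectSum.toModule k U (KM k b V') (fun u =>
    (DirectSum.lof k V' (fun v => FIM k (b - 1) {y : V' // y ≠ v}) (i u)).comp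
      (FImap k (b - 1) (restrictEmb i u)))

/-- Postcomposition action of `g ∈ S_b` on `k[Hom_FI(U,b)]`. -/
def postMap (k : Type) [Field k] (b : ℕ) {U : Type} [Fintype U]
    (g : Equiv.Perm (Fin b)) : FIM k b U →ₗ[k] FIM k b U :=
  Finsupp.lift (FIM k b U) k (U ↪ Fin b)
    (fun f => Finsupp.single (f.trans g.toEmbedding) 1)

/-- Componentwise postcomposition action of `g ∈ S_{b-1}` on
`(k⟨1⟩ ⊙ k[Hom_FI(-,b-1)])(U)`. -/
def KMpost (k : Type) [Field k] (b : ℕ) {U : Type} [Fintype U]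
    (g : Equiv.Perm (Fin (b - 1))) : KM k b U →ₗ[k] KM k b U :=
  DirectSum.toModule k U (KM k b U) (fun u =>
    (DirectSum.lof k U (fun v => FIM k (b - 1) {x : U // x ≠ v}) u).comp
      (postMap k (b - 1) g))

/-- The inclusion `S_{b-1} ⊆ S_b` fixing the last point. -/
def extPermTop (b : ℕ) : Equiv.Perm (Fin (b - 1)) →* Equiv.Perm (Fin b) :=
  Equiv.Perm.extendDomainHom
    ({ toFun := fun i => ⟨⟨(i : ℕ), lt_of_lt_of_le i.isLt (Nat.sub_le b 1)⟩, i.isLt⟩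
       invFun := fun x => ⟨(x.1 : ℕ), x.2⟩
       left_inv := fun _ => rfl
       right_inv := fun _ => rfl } :
      Fin (b - 1) ≃ {x : Fin b // (x : ℕ) < b - 1})

end
noncomputable section Helpers

lemma lift_single {k M X : Type*} [Field k] [AddCommMonoid M] [Module k M]
    (φ : X → M) (x : X) : Finsupp.lift M k X φ (Finsupp.single x 1) = φ x := by
  simp [Finsupp.lift_apply, Finsupp.sum_single_index]

variable {b : ℕ} {U : Type}

def downAll (g : U ↪ Fin b) (h : ∀ u, (g u : ℕ) < b - 1) : U ↪ Fin (b - 1) where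
  toFun u := ⟨(g u : ℕ), h u⟩
  inj' := by intro x y hxy; have h2 := congrArg Fin.val hxy; exact g.injective (Fin.ext h2)

def castUp (f : U ↪ Fin (b - 1)) : U ↪ Fin b where
  toFun u := ⟨(f u : ℕ), by have := (f u).isLt; omega⟩
  inj' := by intro x y hxy; have h2 := congrArg Fin.val hxy; exact f.injective (Fin.ext h2)

def restrictDown (g : U ↪ Fin b) (u : U) (hg : (g u : ℕ) = b - 1) :
    {x : U // x ≠ u} ↪ Fin (b - 1) where
  toFun x := ⟨(g x.1 : ℕ), by
    have h1 : (g x.1 : ℕ) ≠ (g u : ℕ) := fun h => x.2 (g.injective (Fin.ext h))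
    have := (g x.1).isLt
    omega⟩
  inj' := by
    intro x y hxy
    have h2 := congrArg Fin.val hxy
    exact Subtype.ext (g.injective (Fin.ext h2))

@[simp] lemma downAll_val (g : U ↪ Fin b) (h) (u : U) : ((downAll g h) u : ℕ) = (g u : ℕ) := rfl
@[simp] lemma castUp_val (f : U ↪ Fin (b - 1)) (u : U) : ((castUp f) u : ℕ) = (f u : ℕ) := rfl
@[simp] lemma restrictDown_val (g : U ↪ Fin b) (u : U) (hg) (x : {x : U // x ≠ u}) :
    ((restrictDown g u hg) x : ℕ) = (g x.1 : ℕ) := rfl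

lemma extendEmb_val_self (hb : 1 ≤ b) (u : U) (f : {x : U // x ≠ u} ↪ Fin (b - 1)) :
    ((extendEmb b hb u f) u : ℕ) = b - 1 := by simp [extendEmb]

lemma extendEmb_val_ne (hb : 1 ≤ b) (u : U) (f : {x : U // x ≠ u} ↪ Fin (b - 1))
    {x : U} (h : x ≠ u) : ((extendEmb b hb u f) x : ℕ) = (f ⟨x, h⟩ : ℕ) := by
  simp [extendEmb, h]

lemma extendEmb_top_iff (hb : 1 ≤ b) (u : U) (f : {x : U // x ≠ u} ↪ Fin (b - 1))
    {x : U} : ((extendEmb b hb u f) x : ℕ) = b - 1 ↔ x = u := by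
  constructor
  · intro h
    by_contra hx
    rw [extendEmb_val_ne hb u f hx] at h
    have := (f ⟨x, hx⟩).isLt
    omega
  · intro h; rw [h]; exact extendEmb_val_self hb u f

lemma extend_restrict (hb : 1 ≤ b) (g : U ↪ Fin b) (u : U) (hg : (g u : ℕ) = b - 1) :
    extendEmb b hb u (restrictDown g u hg) = g := by
  apply Function.Embedding.ext
  intro x
  apply Fin.ext
  by_cases h : x = u
  · subst h; rw [extendEmb_val_self hb, hg]
  · rw [extendEmb_val_ne hb u _ h]; rfl

lemma restrict_extend (hb : 1 ≤ b) (u : U) (f : {x : U // x ≠ u} ↪ Fin (b - 1))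
    (hg : ((extendEmb b hb u f) u : ℕ) = b - 1) :
    restrictDown (extendEmb b hb u f) u hg = f := by
  apply Function.Embedding.ext
  intro x
  apply Fin.ext
  rw [restrictDown_val, extendEmb_val_ne hb u f x.2]

@[simp] lemma castUp_downAll (g : U ↪ Fin b) (h : ∀ u, (g u : ℕ) < b - 1) :
    castUp (downAll g h) = g := by
  apply Function.Embedding.ext; intro x; apply Fin.ext; rfl

@[simp] lemma downAll_castUp (f : U ↪ Fin (b - 1)) (h) :
    downAll (castUp f) h = f := by
  apply Function.Embedding.ext; intro x; apply Fin.ext; rfl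

end Helpers
noncomputable section Helpers2

variable (k : Type) [Field k] {b : ℕ} {U V' : Type}

lemma piMap_single [Fintype U] (hb : 1 ≤ b) (f : U ↪ Fin b) :
    piMap k b hb U (Finsupp.single f 1) =
      if h : ∀ u, (f u : ℕ) < b - 1 then Finsupp.single (downAll f h) 1 else 0 := by
  rw [piMap, lift_single]
  rfl

lemma FImap_single [Fintype U] [Fintype V'] (i : U ↪ V') (f : U ↪ Fin b) :
    FImap k b i (Finsupp.single f 1) =
      ∑ f' ∈ Finset.univ.filter (fun f' : V' ↪ Fin b => ∀ u, f' (i u) = f u),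
        Finsupp.single f' 1 := by
  rw [FImap, lift_single]

lemma alphaMap_lof [Fintype U] (hb : 1 ≤ b) (u : U)
    (f : {x : U // x ≠ u} ↪ Fin (b - 1)) :
    alphaMap k b hb U
        (DirectSum.lof k U (fun v => FIM k (b - 1) {x : U // x ≠ v}) u
          (Finsupp.single f 1)) =
      Finsupp.single (extendEmb b hb u f) 1 := by
  rw [alphaMap, DirectSum.toModule_lof, lift_single]

lemma postMap_single [Fintype U] (g : Equiv.Perm (Fin b)) (f : U ↪ Fin b) :
    postMap k b g (Finsupp.single f 1) = Finsupp.single (f.trans g.toEmbedding) 1 := by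
  rw [postMap, lift_single]

lemma KMmap_lof [Fintype U] [Fintype V'] (i : U ↪ V') (u : U)
    (f : {x : U // x ≠ u} ↪ Fin (b - 1)) :
    KMmap k b i
        (DirectSum.lof k U (fun v => FIM k (b - 1) {x : U // x ≠ v}) u
          (Finsupp.single f 1)) =
      DirectSum.lof k V' (fun v => FIM k (b - 1) {y : V' // y ≠ v}) (i u)
        (FImap k (b - 1) (restrictEmb i u) (Finsupp.single f 1)) := by
  rw [KMmap, DirectSum.toModule_lof]; rfl

lemma KMpost_lof [Fintype U] (g : Equiv.Perm (Fin (b - 1))) (u : U)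
    (f : {x : U // x ≠ u} ↪ Fin (b - 1)) :
    KMpost k b g
        (DirectSum.lof k U (fun v => FIM k (b - 1) {x : U // x ≠ v}) u
          (Finsupp.single f 1)) =
      DirectSum.lof k U (fun v => FIM k (b - 1) {x : U // x ≠ v}) u
        (Finsupp.single (f.trans g.toEmbedding) 1) := by
  rw [KMpost, DirectSum.toModule_lof]
  rw [LinearMap.comp_apply, postMap_single k g f]

def sigmaMap (b : ℕ) (U : Type) [Fintype U] : FIM k (b - 1) U →ₗ[k] FIM k b U :=
  Finsupp.lift (FIM k b U) k (U ↪ Fin (b - 1)) (fun f => Finsupp.single (castUp f) 1)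

def betaMap (b : ℕ) (U : Type) [Fintype U] : FIM k b U →ₗ[k] KM k b U :=
  Finsupp.lift (KM k b U) k (U ↪ Fin b) (fun g =>
    if h : ∃ u, (g u : ℕ) = b - 1 then
      DirectSum.lof k U (fun v => FIM k (b - 1) {x : U // x ≠ v}) h.choose
        (Finsupp.single (restrictDown g h.choose h.choose_spec) 1)
    else 0)

lemma sigmaMap_single [Fintype U] (f : U ↪ Fin (b - 1)) :
    sigmaMap k b U (Finsupp.single f 1) = Finsupp.single (castUp f) 1 := by
  rw [sigmaMap, lift_single]

lemma betaMap_single [Fintype U] (g : U ↪ Fin b) :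
    betaMap k b U (Finsupp.single g 1) =
      if h : ∃ u, (g u : ℕ) = b - 1 then
        DirectSum.lof k U (fun v => FIM k (b - 1) {x : U // x ≠ v}) h.choose
          (Finsupp.single (restrictDown g h.choose h.choose_spec) 1)
      else 0 := by
  rw [betaMap, lift_single]

end Helpers2

-- probe ext behavior
example (k : Type) [Field k] (b : ℕ) (hb : 1 ≤ b) (U : Type) [Fintype U]
    (F G : KM k b U →ₗ[k] FIM k b U) (h : ∀ u f, F (DirectSum.lof k U (fun v => FIM k (b - 1) {x : U // x ≠ v}) u (Finsupp.single f 1)) = G (DirectSum.lof k U _ u (Finsupp.single f 1))) : F = G := by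
  ext u f
  exact DFunLike.congr_fun (h u f) _
noncomputable section Helpers3

variable (k : Type) [Field k] {b : ℕ} {U V' : Type}

lemma beta_alpha_single [Fintype U] (hb : 1 ≤ b) (u : U)
    (f : {x : U // x ≠ u} ↪ Fin (b - 1)) :
    betaMap k b U (Finsupp.single (extendEmb b hb u f) 1) =
      DirectSum.lof k U (fun v => FIM k (b - 1) {x : U // x ≠ v}) u
        (Finsupp.single f 1) := by
  rw [betaMap_single]
  have hex : ∃ u', ((extendEmb b hb u f) u' : ℕ) = b - 1 :=
    ⟨u, extendEmb_val_self hb u f⟩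
  rw [dif_pos hex]
  have hu : hex.choose = u := (extendEmb_top_iff hb u f).mp hex.choose_spec
  have key : ∀ (u' : U) (h' : ((extendEmb b hb u f) u' : ℕ) = b - 1), u' = u →
      DirectSum.lof k U (fun v => FIM k (b - 1) {x : U // x ≠ v}) u'
          (Finsupp.single (restrictDown (extendEmb b hb u f) u' h') 1) =
        DirectSum.lof k U (fun v => FIM k (b - 1) {x : U // x ≠ v}) u
          (Finsupp.single f 1) := by
    intro u' h' hu'
    subst hu'
    rw [restrict_extend hb u' f h']
  exact key hex.choose hex.choose_spec hu

lemma pi_alpha_single [Fintype U] (hb : 1 ≤ b) (u : U)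
    (f : {x : U // x ≠ u} ↪ Fin (b - 1)) :
    piMap k b hb U (Finsupp.single (extendEmb b hb u f) 1) = 0 := by
  rw [piMap_single, dif_neg]
  intro hall
  have h1 := hall u
  rw [extendEmb_val_self hb u f] at h1
  omega

lemma pi_sigma_single [Fintype U] (hb : 1 ≤ b) (f : U ↪ Fin (b - 1)) :
    piMap k b hb U (sigmaMap k b U (Finsupp.single f 1)) = Finsupp.single f 1 := by
  rw [sigmaMap_single, piMap_single]
  have h : ∀ u, ((castUp f) u : ℕ) < b - 1 := fun u => by
    rw [castUp_val]; exact (f u).isLt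
  rw [dif_pos h, downAll_castUp]

lemma decomp_single [Fintype U] (hb : 1 ≤ b) (g : U ↪ Fin b) :
    alphaMap k b hb U (betaMap k b U (Finsupp.single g 1)) +
      sigmaMap k b U (piMap k b hb U (Finsupp.single g 1)) = Finsupp.single g 1 := by
  rw [betaMap_single, piMap_single]
  by_cases h : ∃ u, (g u : ℕ) = b - 1
  · rw [dif_pos h, dif_neg, map_zero, add_zero, alphaMap_lof,
      extend_restrict hb g h.choose h.choose_spec]
    intro hall
    have h1 := hall h.choose
    have h2 := h.choose_spec
    omega
  · rw [dif_neg h, map_zero, zero_add]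
    have h' : ∀ u, (g u : ℕ) < b - 1 := by
      intro u
      have h1 := (g u).isLt
      have h2 : (g u : ℕ) ≠ b - 1 := fun hc => h ⟨u, hc⟩
      omega
    rw [dif_pos h', sigmaMap_single, castUp_downAll]

lemma extPermTop_val_lt (g : Equiv.Perm (Fin (b - 1))) {x : Fin b}
    (h : (x : ℕ) < b - 1) : ((extPermTop b g x : Fin b) : ℕ) = (g ⟨(x : ℕ), h⟩ : ℕ) := by
  have h1 : extPermTop b g x = Equiv.Perm.extendDomain g
      ({ toFun := fun i => ⟨⟨(i : ℕ), lt_of_lt_of_le i.isLt (Nat.sub_le b 1)⟩, i.isLt⟩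
         invFun := fun x => ⟨(x.1 : ℕ), x.2⟩
         left_inv := fun _ => rfl
         right_inv := fun _ => rfl } :
        Fin (b - 1) ≃ {x : Fin b // (x : ℕ) < b - 1}) x := rfl
  rw [h1, Equiv.Perm.extendDomain_apply_subtype (p := fun y : Fin b => (y : ℕ) < b - 1) g _ (b := x) h]
  rfl

lemma extPermTop_val_ge (g : Equiv.Perm (Fin (b - 1))) {x : Fin b}
    (h : ¬ (x : ℕ) < b - 1) : extPermTop b g x = x := by
  have h1 : extPermTop b g x = Equiv.Perm.extendDomain g
      ({ toFun := fun i => ⟨⟨(i : ℕ), lt_of_lt_of_le i.isLt (Nat.sub_le b 1)⟩, i.isLt⟩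
         invFun := fun x => ⟨(x.1 : ℕ), x.2⟩
         left_inv := fun _ => rfl
         right_inv := fun _ => rfl } :
        Fin (b - 1) ≃ {x : Fin b // (x : ℕ) < b - 1}) x := rfl
  rw [h1, Equiv.Perm.extendDomain_apply_not_subtype (p := fun y : Fin b => (y : ℕ) < b - 1) g _ (b := x) h]

lemma extPermTop_lt_iff (g : Equiv.Perm (Fin (b - 1))) (x : Fin b) :
    ((extPermTop b g x : Fin b) : ℕ) < b - 1 ↔ (x : ℕ) < b - 1 := by
  by_cases h : (x : ℕ) < b - 1
  · simp only [h, iff_true]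
    rw [extPermTop_val_lt g h]
    exact (g ⟨(x : ℕ), h⟩).isLt
  · simp only [h, iff_false]
    rw [extPermTop_val_ge g h]
    exact h

end Helpers3
noncomputable section Helpers4

variable (k : Type) [Field k] {b : ℕ} {U V' : Type}

lemma beta_alpha_comp [Fintype U] (hb : 1 ≤ b) :
    (betaMap k b U).comp (alphaMap k b hb U) = LinearMap.id := by
  ext u f
  have h : (betaMap k b U).comp (alphaMap k b hb U)
        (DirectSum.lof k U (fun v => FIM k (b - 1) {x : U // x ≠ v}) u
          (Finsupp.single f 1)) =
      (LinearMap.id : KM k b U →ₗ[k] KM k b U)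
        (DirectSum.lof k U (fun v => FIM k (b - 1) {x : U // x ≠ v}) u
          (Finsupp.single f 1)) := by
    rw [LinearMap.comp_apply, alphaMap_lof, beta_alpha_single, LinearMap.id_apply]
  rename_i j a
  exact congrArg (fun z : KM k b U => z j a) h

lemma pi_alpha_comp [Fintype U] (hb : 1 ≤ b) :
    (piMap k b hb U).comp (alphaMap k b hb U) = 0 := by
  ext u f
  have h : (piMap k b hb U).comp (alphaMap k b hb U)
        (DirectSum.lof k U (fun v => FIM k (b - 1) {x : U // x ≠ v}) u
          (Finsupp.single f 1)) =
      (0 : KM k b U →ₗ[k] FIM k (b - 1) U)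
        (DirectSum.lof k U (fun v => FIM k (b - 1) {x : U // x ≠ v}) u
          (Finsupp.single f 1)) := by
    rw [LinearMap.comp_apply, alphaMap_lof, pi_alpha_single, LinearMap.zero_apply]
  exact DFunLike.congr_fun h _

lemma pi_sigma_comp [Fintype U] (hb : 1 ≤ b) :
    (piMap k b hb U).comp (sigmaMap k b U) = LinearMap.id := by
  ext f
  have h : (piMap k b hb U).comp (sigmaMap k b U) (Finsupp.single f 1) =
      (LinearMap.id : FIM k (b - 1) U →ₗ[k] FIM k (b - 1) U) (Finsupp.single f 1) := by
    rw [LinearMap.comp_apply, pi_sigma_single, LinearMap.id_apply]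
  exact DFunLike.congr_fun h _

lemma decomp_comp [Fintype U] (hb : 1 ≤ b) :
    (alphaMap k b hb U).comp (betaMap k b U) +
      (sigmaMap k b U).comp (piMap k b hb U) = LinearMap.id := by
  ext f
  have h : ((alphaMap k b hb U).comp (betaMap k b U) +
        (sigmaMap k b U).comp (piMap k b hb U)) (Finsupp.single f 1) =
      (LinearMap.id : FIM k b U →ₗ[k] FIM k b U) (Finsupp.single f 1) := by
    rw [LinearMap.add_apply, LinearMap.comp_apply, LinearMap.comp_apply,
      decomp_single, LinearMap.id_apply]
  exact DFunLike.congr_fun h _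

lemma pi_natural [Fintype U] [Fintype V'] (hb : 1 ≤ b) (i : U ↪ V') :
    (piMap k b hb V').comp (FImap k b i) = (FImap k (b - 1) i).comp (piMap k b hb U) := by
  ext f
  have h : (piMap k b hb V').comp (FImap k b i) (Finsupp.single f 1) =
      (FImap k (b - 1) i).comp (piMap k b hb U) (Finsupp.single f 1) := by
    rw [LinearMap.comp_apply, LinearMap.comp_apply, FImap_single, map_sum, piMap_single]
    by_cases hf : ∀ u, (f u : ℕ) < b - 1
    · rw [dif_pos hf, FImap_single]
      have e1 := Finset.sum_filter_of_ne
        (s := Finset.univ.filter (fun f' : V' ↪ Fin b => ∀ u, f' (i u) = f u))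
        (f := fun f' : V' ↪ Fin b => piMap k b hb V' (Finsupp.single f' 1))
        (p := fun f' : V' ↪ Fin b => ∀ v, (f' v : ℕ) < b - 1)
        (by
          intro x hx hne
          by_contra hp
          apply hne
          show piMap k b hb V' (Finsupp.single x 1) = 0
          rw [piMap_single, dif_neg hp])
      rw [← e1]
      refine Finset.sum_bij'
        (fun a ha => downAll a (Finset.mem_filter.mp ha).2)
        (fun a _ => castUp a) ?_ ?_ ?_ ?_ ?_
      · intro a ha
        have ha2 := (Finset.mem_filter.mp (Finset.mem_filter.mp ha).1).2
        simp only [Finset.mem_filter, Finset.mem_univ, true_and]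
        intro u
        apply Fin.ext
        rw [downAll_val, downAll_val]
        exact congrArg Fin.val (ha2 u)
      · intro a ha
        have ha2 := (Finset.mem_filter.mp ha).2
        simp only [Finset.mem_filter, Finset.mem_univ, true_and]
        constructor
        · intro u
          apply Fin.ext
          rw [castUp_val]
          have h2 := congrArg Fin.val (ha2 u)
          rw [downAll_val] at h2
          exact h2
        · intro v
          rw [castUp_val]
          exact (a v).isLt
      · intro a ha
        exact castUp_downAll a (Finset.mem_filter.mp ha).2
      · intro a ha
        apply downAll_castUp
      · intro a ha
        rw [piMap_single, dif_pos (Finset.mem_filter.mp ha).2]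
    · rw [dif_neg hf, map_zero]
      apply Finset.sum_eq_zero
      intro f' hf'
      rw [piMap_single, dif_neg]
      intro hall
      apply hf
      intro u
      have h1 := congrArg Fin.val ((Finset.mem_filter.mp hf').2 u)
      have h2 := hall (i u)
      omega
  exact DFunLike.congr_fun h _

lemma alpha_natural [Fintype U] [Fintype V'] (hb : 1 ≤ b) (i : U ↪ V') :
    (FImap k b i).comp (alphaMap k b hb U) = (alphaMap k b hb V').comp (KMmap k b i) := by
  ext u f
  have h : (FImap k b i).comp (alphaMap k b hb U)
        (DirectSum.lof k U (fun v => FIM k (b - 1) {x : U // x ≠ v}) u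
          (Finsupp.single f 1)) =
      (alphaMap k b hb V').comp (KMmap k b i)
        (DirectSum.lof k U (fun v => FIM k (b - 1) {x : U // x ≠ v}) u
          (Finsupp.single f 1)) := by
    rw [LinearMap.comp_apply, LinearMap.comp_apply, alphaMap_lof, FImap_single,
      KMmap_lof, FImap_single]
    simp only [map_sum, alphaMap_lof]
    refine Finset.sum_bij'
      (fun a ha => restrictDown a (i u) (by
        have h1 := congrArg Fin.val ((Finset.mem_filter.mp ha).2 u)
        rw [extendEmb_val_self hb u f] at h1
        exact h1))
      (fun a _ => extendEmb b hb (i u) a) ?_ ?_ ?_ ?_ ?_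
    · intro a ha
      have ha2 := (Finset.mem_filter.mp ha).2
      simp only [Finset.mem_filter, Finset.mem_univ, true_and]
      intro x
      apply Fin.ext
      rw [restrictDown_val]
      have h1 := congrArg Fin.val (ha2 x.1)
      rw [extendEmb_val_ne hb u f x.2] at h1
      exact h1
    · intro a ha
      have ha2 := (Finset.mem_filter.mp ha).2
      simp only [Finset.mem_filter, Finset.mem_univ, true_and]
      intro x
      apply Fin.ext
      by_cases hx : x = u
      · subst hx
        rw [extendEmb_val_self hb (i x) a, extendEmb_val_self hb x f]
      · have hix : i x ≠ i u := fun hc => hx (i.injective hc)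
        rw [extendEmb_val_ne hb (i u) a hix, extendEmb_val_ne hb u f hx]
        exact congrArg Fin.val (ha2 ⟨x, hx⟩)
    · intro a ha
      exact extend_restrict hb a (i u) _
    · intro a ha
      exact restrict_extend hb (i u) a _
    · intro a ha
      rw [extend_restrict hb a (i u) _]
  exact DFunLike.congr_fun h _

lemma pi_equiv [Fintype U] (hb : 1 ≤ b) (g : Equiv.Perm (Fin (b - 1))) :
    (piMap k b hb U).comp (postMap k b (extPermTop b g)) =
      (postMap k (b - 1) g).comp (piMap k b hb U) := by
  ext f
  have h : (piMap k b hb U).comp (postMap k b (extPermTop b g)) (Finsupp.single f 1) =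
      (postMap k (b - 1) g).comp (piMap k b hb U) (Finsupp.single f 1) := by
    rw [LinearMap.comp_apply, LinearMap.comp_apply, postMap_single, piMap_single,
      piMap_single]
    by_cases hf : ∀ u, (f u : ℕ) < b - 1
    · have hf' : ∀ u, ((f.trans (extPermTop b g).toEmbedding) u : ℕ) < b - 1 :=
        fun u => (extPermTop_lt_iff g (f u)).mpr (hf u)
      rw [dif_pos hf', dif_pos hf, postMap_single]
      congr 1
      apply Function.Embedding.ext
      intro x
      apply Fin.ext
      rw [downAll_val]
      exact extPermTop_val_lt g (hf x)
    · have hf' : ¬ ∀ u, ((f.trans (extPermTop b g).toEmbedding) u : ℕ) < b - 1 := by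
        intro hall
        apply hf
        intro u
        exact (extPermTop_lt_iff g (f u)).mp (hall u)
      rw [dif_neg hf', dif_neg hf, map_zero]
  exact DFunLike.congr_fun h _

lemma alpha_equiv [Fintype U] (hb : 1 ≤ b) (g : Equiv.Perm (Fin (b - 1))) :
    (alphaMap k b hb U).comp (KMpost k b g) =
      (postMap k b (extPermTop b g)).comp (alphaMap k b hb U) := by
  ext u f
  have h : (alphaMap k b hb U).comp (KMpost k b g)
        (DirectSum.lof k U (fun v => FIM k (b - 1) {x : U // x ≠ v}) u
          (Finsupp.single f 1)) =
      (postMap k b (extPermTop b g)).comp (alphaMap k b hb U)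
        (DirectSum.lof k U (fun v => FIM k (b - 1) {x : U // x ≠ v}) u
          (Finsupp.single f 1)) := by
    rw [LinearMap.comp_apply, LinearMap.comp_apply, KMpost_lof, alphaMap_lof,
      alphaMap_lof, postMap_single]
    congr 1
    apply Function.Embedding.ext
    intro x
    apply Fin.ext
    show ((extendEmb b hb u (f.trans g.toEmbedding)) x : ℕ) =
      ((extPermTop b g) ((extendEmb b hb u f) x) : ℕ)
    by_cases hx : x = u
    · subst hx
      have h1 : ¬ (((extendEmb b hb x f) x : ℕ) < b - 1) := by
        rw [extendEmb_val_self hb]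
        omega
      rw [extendEmb_val_self hb, extPermTop_val_ge g h1, extendEmb_val_self hb]
    · have h1 : ((extendEmb b hb u f) x : ℕ) < b - 1 := by
        rw [extendEmb_val_ne hb u f hx]
        exact (f ⟨x, hx⟩).isLt
      rw [extendEmb_val_ne hb u _ hx, extPermTop_val_lt g h1]
      have h2 : (⟨((extendEmb b hb u f) x : ℕ), h1⟩ : Fin (b - 1)) = f ⟨x, hx⟩ :=
        Fin.ext (extendEmb_val_ne hb u f hx)
      rw [h2]
      rfl
  exact DFunLike.congr_fun h _

end Helpers4
/-- For `b ≥ 1` there is a short exact sequence of `FI`-modules (valued in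
`k[S_{b-1}]`-modules)
`0 → k⟨1⟩ ⊙ k[Hom_FI(-, b-1)] → Res k[Hom_FI(-, b)] → k[Hom_FI(-, b-1)] → 0`:
evaluated at each finite set `U`, `alphaMap` is injective, its range is the kernel of
`piMap`, and `piMap` is surjective; moreover both maps commute with the (transpose,
covariant) `FI`-structure maps and with the `S_{b-1}`-actions. -/
theorem stmt19 (k : Type) [Field k] (b : ℕ) (hb : 1 ≤ b) :
    ∀ (U V' : Type) [Fintype U] [Fintype V'] (i : U ↪ V'),
      Function.Injective (alphaMap k b hb U) ∧
      LinearMap.range (alphaMap k b hb U) = LinearMap.ker (piMap k b hb U) ∧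
      Function.Surjective (piMap k b hb U) ∧
      (piMap k b hb V').comp (FImap k b i) = (FImap k (b - 1) i).comp (piMap k b hb U) ∧
      (FImap k b i).comp (alphaMap k b hb U) = (alphaMap k b hb V').comp (KMmap k b i) ∧
      (∀ g : Equiv.Perm (Fin (b - 1)),
        (piMap k b hb U).comp (postMap k b (extPermTop b g)) =
          (postMap k (b - 1) g).comp (piMap k b hb U) ∧
        (alphaMap k b hb U).comp (KMpost k b g) =
          (postMap k b (extPermTop b g)).comp (alphaMap k b hb U)) := by

  intro U V' _ _ i
  refine ⟨?_, ?_, ?_, pi_natural k hb i, alpha_natural k hb i,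
    fun g => ⟨pi_equiv k hb g, alpha_equiv k hb g⟩⟩
  · intro x y hxy
    have h1 := congrArg (betaMap k b U) hxy
    rw [← LinearMap.comp_apply, ← LinearMap.comp_apply, beta_alpha_comp k hb] at h1
    simpa using h1
  · apply le_antisymm
    · rintro x ⟨y, rfl⟩
      rw [LinearMap.mem_ker, ← LinearMap.comp_apply, pi_alpha_comp k hb,
        LinearMap.zero_apply]
    · intro x hx
      refine ⟨betaMap k b U x, ?_⟩
      have h2 := DFunLike.congr_fun (decomp_comp k hb (U := U)) x
      simp only [LinearMap.add_apply, LinearMap.comp_apply, LinearMap.id_apply] at h2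
      rw [LinearMap.mem_ker.mp hx, map_zero, add_zero] at h2
      exact h2
  · intro y
    refine ⟨sigmaMap k b U y, ?_⟩
    have h3 := DFunLike.congr_fun (pi_sigma_comp k hb (U := U)) y
    simpa using h3
end
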